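/- arXiv:1710.03989 — 9 statements merged into one kernel-verified Lean document; each statement's English description precedes it below -/
import Mathlib

section
/- Let X be a real Banach space, let F : X → ℝ be locally Lipschitz at x̄ ∈ X, let (u, v) ∈ X × X, and let {t_k} be a sequence of positive reals converging to 0 and {v^k} a sequence in X converging to v such that F(x̄ + t_k u + ½ t_k² v^k) ≥ F(x̄) for all k ∈ ℕ. If F°(x̄, u) = 0, then F°(x̄, v) + F°°(x̄, u) ≥ 0. -/
open Filter Topology Set

/-- `F` is locally Lipschitz at `xbar`: Lipschitz on some neighborhood of `xbar`. -/
def LocallyLipschitzAt {X : Type*} [NormedAddCommGroup X] (F : X → ℝ) (xbar : X) : Prop :=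
  ∃ L : ℝ, 0 ≤ L ∧ ∃ U ∈ 𝓝 xbar, ∀ x ∈ U, ∀ y ∈ U, |F x - F y| ≤ L * ‖x - y‖

/-- The Clarke generalized directional derivative
`F°(xbar, u) = limsup_{x → xbar, t ↓ 0} (F(x + t u) - F x) / t`. -/
noncomputable def clarkeD {X : Type*} [NormedAddCommGroup X] [NormedSpace ℝ X]
    (F : X → ℝ) (xbar u : X) : ℝ :=
  Filter.limsup (fun p : X × ℝ => (F (p.1 + p.2 • u) - F p.1) / p.2)
    ((𝓝 xbar) ×ˢ (𝓝[>] (0:ℝ)))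

/-- The second-order upper generalized directional derivative
`F°°(xbar, u) = limsup_{t ↓ 0} (F(xbar + t u) - F xbar - t F°(xbar, u)) / (t²/2)`,
a value in the extended reals. -/
noncomputable def clarkeD2 {X : Type*} [NormedAddCommGroup X] [NormedSpace ℝ X]
    (F : X → ℝ) (xbar u : X) : EReal :=
  Filter.limsup
    (fun t : ℝ =>
      (((F (xbar + t • u) - F xbar - t * clarkeD F xbar u) / (t ^ 2 / 2) : ℝ) : EReal))
    (𝓝[>] (0:ℝ))

set_option maxHeartbeats 1000000 in
/-- Lemma 2.2: if `F` is locally Lipschitz at `xbar`, `tseq` is a positive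
sequence converging to `0`, `vseq → v`, `F (xbar + tseq k • u + ½ (tseq k)² • vseq k) ≥ F xbar`
for all `k`, and `F°(xbar, u) = 0`, then `F°(xbar, v) + F°°(xbar, u) ≥ 0`. -/
theorem clarke_second_order_nonneg_of_seq {X : Type*} [NormedAddCommGroup X] [NormedSpace ℝ X]
    [CompleteSpace X] (F : X → ℝ) (xbar u v : X)
    (hF : LocallyLipschitzAt F xbar)
    (tseq : ℕ → ℝ) (vseq : ℕ → X)
    (ht_pos : ∀ k, 0 < tseq k) (ht_lim : Tendsto tseq atTop (𝓝 0))
    (hv_lim : Tendsto vseq atTop (𝓝 v))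
    (hineq : ∀ k, F xbar ≤ F (xbar + tseq k • u + ((tseq k) ^ 2 / 2) • vseq k))
    (hc : clarkeD F xbar u = 0) :
    (0 : EReal) ≤ (clarkeD F xbar v : EReal) + clarkeD2 F xbar u := by
  obtain ⟨L, hL0, U, hU, hLip⟩ := hF
  obtain ⟨ε, hε, hball⟩ := Metric.mem_nhds_iff.mp hU
  set l := (𝓝 xbar) ×ˢ (𝓝[>] (0:ℝ)) with hl
  set Q : X × ℝ → ℝ := fun p => (F (p.1 + p.2 • v) - F p.1) / p.2 with hQ
  set A : ℝ := clarkeD F xbar v with hA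
  have hv1 : (0:ℝ) < ‖v‖ + 1 := by positivity
  set c : ℝ := ε / (2 * (‖v‖ + 1)) with hcdef
  have hc0 : 0 < c := by positivity
  -- eventual bound for Q on l
  have h1 : ∀ᶠ x in 𝓝 xbar, dist x xbar < ε/2 :=
    Metric.ball_mem_nhds xbar (by positivity)
  have h2 : ∀ᶠ t in 𝓝[>] (0:ℝ), 0 < t ∧ t < c :=
    Filter.eventually_of_mem (Ioo_mem_nhdsGT_of_mem ⟨le_rfl, hc0⟩) (fun t ht => ⟨ht.1, ht.2⟩)
  have hQbound : ∀ᶠ p in l, |Q p| ≤ L * ‖v‖ := by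
    filter_upwards [Filter.Eventually.prod_mk h1 h2] with p hp
    have ht0 : 0 < p.2 := hp.2.1
    have htc : p.2 < c := hp.2.2
    have hxU : p.1 ∈ U := hball (by
      simp only [Metric.mem_ball]; linarith [hp.1])
    have hnv : ‖p.2 • v‖ = p.2 * ‖v‖ := by
      rw [norm_smul, Real.norm_eq_abs, abs_of_pos ht0]
    have htv : p.2 * (‖v‖ + 1) < ε/2 := by
      have h := (lt_div_iff₀ (by positivity : (0:ℝ) < 2 * (‖v‖+1))).mp htc
      nlinarith
    have hx2U : p.1 + p.2 • v ∈ U := hball (by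
      simp only [Metric.mem_ball]
      calc dist (p.1 + p.2 • v) xbar ≤ dist (p.1 + p.2 • v) p.1 + dist p.1 xbar :=
            dist_triangle _ _ _
        _ < ε := by
            rw [dist_eq_norm, add_sub_cancel_left, hnv]
            nlinarith [norm_nonneg v, hp.1])
    have hlip := hLip _ hx2U _ hxU
    rw [add_sub_cancel_left, hnv] at hlip
    rw [hQ]
    have : |(F (p.1 + p.2 • v) - F p.1) / p.2| = |F (p.1 + p.2 • v) - F p.1| / p.2 := by
      rw [abs_div, abs_of_pos ht0]
    rw [this, div_le_iff₀ ht0]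
    calc |F (p.1 + p.2 • v) - F p.1| ≤ L * (p.2 * ‖v‖) := hlip
      _ = L * ‖v‖ * p.2 := by ring
  have hbdd : l.IsBoundedUnder (· ≤ ·) Q :=
    ⟨L * ‖v‖, eventually_map.mpr (hQbound.mono fun p hp => (abs_le.mp hp).2)⟩
  have hQupper : ∀ δ : ℝ, 0 < δ → ∀ᶠ p in l, Q p < A + δ := by
    intro δ hδ
    refine eventually_lt_of_limsup_lt ?_ hbdd
    have : limsup Q l = A := rfl
    rw [this]; linarith
  -- the sequence tends into l
  set sk : ℕ → ℝ := fun k => (tseq k)^2 / 2 with hsk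
  have hsk_pos : ∀ k, 0 < sk k := fun k => by have := ht_pos k; positivity
  have hsk_lim : Tendsto sk atTop (𝓝 0) := by
    have := ((ht_lim.mul ht_lim).div_const 2)
    simpa [hsk, pow_two, mul_zero] using this
  set xk : ℕ → X := fun k => xbar + tseq k • u with hxk
  have hxk_lim : Tendsto xk atTop (𝓝 xbar) := by
    have : Tendsto (fun k => xbar + tseq k • u) atTop (𝓝 (xbar + (0:ℝ) • u)) :=
      tendsto_const_nhds.add (ht_lim.smul_const u)
    simpa using this
  have hsk_mem : Tendsto sk atTop (𝓝[>] (0:ℝ)) :=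
    tendsto_nhdsWithin_of_tendsto_nhds_of_eventually_within _ hsk_lim
      (Eventually.of_forall fun k => hsk_pos k)
  have htseq_mem : Tendsto tseq atTop (𝓝[>] (0:ℝ)) :=
    tendsto_nhdsWithin_of_tendsto_nhds_of_eventually_within _ ht_lim
      (Eventually.of_forall fun k => ht_pos k)
  have hpk : Tendsto (fun k => (xk k, sk k)) atTop l := hxk_lim.prodMk hsk_mem
  -- the second-order quotient
  set g : ℝ → ℝ := fun t => (F (xbar + t • u) - F xbar) / (t^2/2) with hg
  have hB : clarkeD2 F xbar u = limsup (fun t : ℝ => ((g t : ℝ) : EReal)) (𝓝[>] (0:ℝ)) := by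
    unfold clarkeD2
    simp only [hc, mul_zero, sub_zero, hg]
  clear_value l Q A g
  -- norm control for membership in U
  have hnorm_lim : Tendsto (fun k => ‖tseq k • u‖ + sk k * ‖v‖ + sk k * ‖vseq k‖)
      atTop (𝓝 0) := by
    have h1' : Tendsto (fun k => ‖tseq k • u‖) atTop (𝓝 0) := by
      have := (ht_lim.smul_const u)
      have := this.norm
      simpa using this
    have h2' : Tendsto (fun k => sk k * ‖v‖) atTop (𝓝 0) := by
      simpa using hsk_lim.mul_const ‖v‖
    have h3' : Tendsto (fun k => sk k * ‖vseq k‖) atTop (𝓝 0) := by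
      have := hsk_lim.mul hv_lim.norm
      simpa using this
    simpa using (h1'.add h2').add h3'
  have hvdiff_lim : Tendsto (fun k => L * ‖vseq k - v‖) atTop (𝓝 0) := by
    have : Tendsto (fun k => ‖vseq k - v‖) atTop (𝓝 0) := by
      have := (hv_lim.sub_const v).norm
      simpa using this
    simpa using this.const_mul L
  -- main step: for every δ > 0, -A - 2δ ≤ clarkeD2
  have hmain : ∀ δ : ℝ, 0 < δ → ((-A - 2*δ : ℝ) : EReal) ≤ clarkeD2 F xbar u := by
    intro δ hδ
    have hQk : ∀ᶠ k in atTop, Q (xk k, sk k) < A + δ := hpk.eventually (hQupper δ hδ)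
    have hLk : ∀ᶠ k in atTop, L * ‖vseq k - v‖ < δ :=
      hvdiff_lim.eventually (gt_mem_nhds hδ)
    have hNk : ∀ᶠ k in atTop, ‖tseq k • u‖ + sk k * ‖v‖ + sk k * ‖vseq k‖ < ε :=
      hnorm_lim.eventually (gt_mem_nhds hε)
    have hev : ∀ᶠ k in atTop, ((-A - 2*δ : ℝ) : EReal) ≤ ((g (tseq k) : ℝ) : EReal) := by
      filter_upwards [hQk, hLk, hNk] with k hQ' hL' hN'
      clear hA hB hQbound hbdd hQupper hc hQk hLk hNk
      rw [EReal.coe_le_coe_iff]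
      set t := tseq k with htk
      set s := sk k with hskk
      have hs0 : 0 < s := hsk_pos k
      have ht0 : 0 < t := ht_pos k
      have hnvk : ‖s • vseq k‖ = s * ‖vseq k‖ := by
        rw [norm_smul, Real.norm_eq_abs, abs_of_pos hs0]
      have hnvv : ‖s • v‖ = s * ‖v‖ := by
        rw [norm_smul, Real.norm_eq_abs, abs_of_pos hs0]
      have hxU : xk k ∈ U := hball (by
        simp only [Metric.mem_ball, dist_eq_norm, hxk, add_sub_cancel_left]
        have := norm_nonneg (s • v); have := norm_nonneg (s • vseq k)
        nlinarith [mul_nonneg hs0.le (norm_nonneg v),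
          mul_nonneg hs0.le (norm_nonneg (vseq k))])
      have hx1U : xk k + s • v ∈ U := hball (by
        simp only [Metric.mem_ball, dist_eq_norm, hxk]
        have : xbar + t • u + s • v - xbar = t • u + s • v := by abel
        rw [this]
        calc ‖t • u + s • v‖ ≤ ‖t • u‖ + ‖s • v‖ := norm_add_le _ _
          _ < ε := by rw [hnvv]; nlinarith [mul_nonneg hs0.le (norm_nonneg (vseq k))])
      have hx2U : xk k + s • vseq k ∈ U := hball (by
        simp only [Metric.mem_ball, dist_eq_norm, hxk]
        have : xbar + t • u + s • vseq k - xbar = t • u + s • vseq k := by abel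
        rw [this]
        calc ‖t • u + s • vseq k‖ ≤ ‖t • u‖ + ‖s • vseq k‖ := norm_add_le _ _
          _ < ε := by rw [hnvk]; nlinarith [mul_nonneg hs0.le (norm_nonneg v)])
      -- Lipschitz estimate
      have hlip := hLip _ hx2U _ hx1U
      have hdiff : xk k + s • vseq k - (xk k + s • v) = s • (vseq k - v) := by
        rw [smul_sub]; abel
      rw [hdiff, norm_smul, Real.norm_eq_abs, abs_of_pos hs0] at hlip
      have hlip' : F (xk k + s • vseq k) - F (xk k + s • v) ≤ s * δ := by
        have h1'' : F (xk k + s • vseq k) - F (xk k + s • v) ≤ L * (s * ‖vseq k - v‖) :=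
          (abs_le.mp hlip).2
        nlinarith [norm_nonneg (vseq k - v)]
      -- the Q estimate
      have hQval : F (xk k + s • v) - F (xk k) = s * Q (xk k, s) := by
        simp only [hQ]; field_simp
      have hQ2 : F (xk k + s • v) - F (xk k) ≤ s * (A + δ) := by
        rw [hQval]; exact mul_le_mul_of_nonneg_left hQ'.le hs0.le
      -- the base inequality
      have hbase : F xbar ≤ F (xk k + s • vseq k) := by
        have := hineq k
        simpa [hxk, hskk, hsk] using this
      have hsum : F xbar ≤ F (xk k) + s * (A + δ) + s * δ := by linarith
      -- conclude on g
      simp only [hg]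
      have hxkval : xbar + t • u = xk k := rfl
      have hsval : t^2/2 = s := rfl
      rw [hxkval, hsval, le_div_iff₀ hs0]
      nlinarith [hsum, hs0]
    have hfreq : ∃ᶠ t in 𝓝[>] (0:ℝ), ((-A - 2*δ : ℝ) : EReal) ≤ ((g t : ℝ) : EReal) :=
      htseq_mem.frequently hev.frequently
    rw [hB]
    exact le_limsup_of_frequently_le hfreq
  -- take δ → 0
  have hB2 : ((-A : ℝ) : EReal) ≤ clarkeD2 F xbar u := by
    have htend : Tendsto (fun n : ℕ => ((-A - 2*(1/(n+1)) : ℝ) : EReal)) atTop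
        (𝓝 ((-A : ℝ) : EReal)) := by
      rw [EReal.tendsto_coe]
      have := tendsto_one_div_add_atTop_nhds_zero_nat (𝕜 := ℝ)
      have := (tendsto_const_nhds (x := -A) (f := atTop (α := ℕ))).sub (this.const_mul 2)
      simpa using this
    refine le_of_tendsto htend (Eventually.of_forall fun n => ?_)
    exact hmain (1/(n+1)) (by positivity)
  calc (0 : EReal) = (A : EReal) + ((-A : ℝ) : EReal) := by
        rw [← EReal.coe_add]; norm_num
    _ ≤ (A : EReal) + clarkeD2 F xbar u := add_le_add_right hB2 _
end

section
/- Let X be a real Banach space, let F : X → ℝ be locally Lipschitz at x̄ ∈ X, let u, v ∈ X, let {t_k} be a sequence of positive reals converging to 0 and {v^k} a sequence in X converging to v. Then limsup_{k → ∞} [F(x̄ + t_k u + ½ t_k² v^k) − F(x̄) − t_k F°(x̄, u)]/(½ t_k²) ≤ F°(x̄, v) + F°°(x̄, u), the inequality being understood in the extended reals. -/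
open Filter Topology Set

/-- Bridge: the `EReal`-valued limsup of a real function which is eventually bounded above
is at most the coercion of its real limsup. -/
lemma ereal_limsup_le_coe_limsup {α : Type*} {f : Filter α} {u : α → ℝ} {C : ℝ}
    (h : ∀ᶠ x in f, u x ≤ C) :
    Filter.limsup (fun x => (u x : EReal)) f ≤ ((Filter.limsup u f : ℝ) : EReal) := by
  set S : Set ℝ := {a : ℝ | ∀ᶠ x in f, u x ≤ a} with hS
  have key : ∀ a ∈ S, Filter.limsup (fun x => (u x : EReal)) f ≤ (a : EReal) := by
    intro a ha
    exact Filter.limsup_le_of_le (by isBoundedDefault)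
      (ha.mono fun x hx => EReal.coe_le_coe_iff.2 hx)
  by_cases hb : BddBelow S
  · have hSne : S.Nonempty := ⟨C, h⟩
    have hls : Filter.limsup u f = sInf S := Filter.limsup_eq
    rw [hls]
    by_contra hcon
    push_neg at hcon
    obtain ⟨r, hr1, hr2⟩ := EReal.exists_between_coe_real hcon
    obtain ⟨a, haS, har⟩ := (csInf_lt_iff hb hSne).1 (EReal.coe_lt_coe_iff.1 hr1)
    exact absurd (((key a haS).trans (by exact_mod_cast har.le)).trans_lt hr2) (lt_irrefl _)
  · have hall : ∀ r : ℝ, Filter.limsup (fun x => (u x : EReal)) f ≤ (r : EReal) := by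
      intro r
      obtain ⟨a, haS, har⟩ := not_bddBelow_iff.1 hb r
      exact (key a haS).trans (by exact_mod_cast har.le)
    have hbot : Filter.limsup (fun x => (u x : EReal)) f = ⊥ := by
      by_contra hne
      obtain ⟨r, hr1, hr2⟩ := EReal.exists_between_coe_real (bot_lt_iff_ne_bot.2 hne)
      exact absurd ((hall r).trans_lt hr2) (lt_irrefl _)
    rw [hbot]; exact bot_le

/-- for `F` locally Lipschitz at `xbar`, a positive sequence `tseq → 0` and
`vseq → v`, one has
`limsup_k (F(xbar + tₖ u + ½ tₖ² vₖ) - F xbar - tₖ F°(xbar, u)) / (½ tₖ²) ≤ F°(xbar, v) + F°°(xbar, u)`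
in the extended reals. -/
theorem limsup_second_order_le {X : Type*} [NormedAddCommGroup X] [NormedSpace ℝ X]
    [CompleteSpace X] (F : X → ℝ) (xbar u v : X)
    (hF : LocallyLipschitzAt F xbar)
    (tseq : ℕ → ℝ) (vseq : ℕ → X)
    (ht_pos : ∀ k, 0 < tseq k) (ht_lim : Tendsto tseq atTop (𝓝 0))
    (hv_lim : Tendsto vseq atTop (𝓝 v)) :
    Filter.limsup
      (fun k : ℕ =>
        (((F (xbar + tseq k • u + ((tseq k) ^ 2 / 2) • vseq k) - F xbar
            - tseq k * clarkeD F xbar u) / ((tseq k) ^ 2 / 2) : ℝ) : EReal))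
      atTop
    ≤ (clarkeD F xbar v : EReal) + clarkeD2 F xbar u := by
  obtain ⟨L, hL, U, hU, hlip⟩ := hF
  obtain ⟨δ, hδ, hball⟩ := Metric.mem_nhds_iff.1 hU
  set A1 : ℕ → ℝ := fun k =>
    (F (xbar + tseq k • u + ((tseq k) ^ 2 / 2) • vseq k)
      - F (xbar + tseq k • u + ((tseq k) ^ 2 / 2) • v)) / ((tseq k) ^ 2 / 2) with hA1def
  set A2 : ℕ → ℝ := fun k =>
    (F (xbar + tseq k • u + ((tseq k) ^ 2 / 2) • v)
      - F (xbar + tseq k • u)) / ((tseq k) ^ 2 / 2) with hA2def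
  set B : ℕ → ℝ := fun k =>
    (F (xbar + tseq k • u) - F xbar - tseq k * clarkeD F xbar u)
      / ((tseq k) ^ 2 / 2) with hBdef
  have hs_pos : ∀ k, (0:ℝ) < (tseq k) ^ 2 / 2 := fun k => by
    have := ht_pos k; positivity
  have hs_lim : Tendsto (fun k => (tseq k) ^ 2 / 2) atTop (𝓝 0) := by
    have := (ht_lim.pow 2).div_const 2
    simpa using this
  -- rewrite the goal function as a sum
  have hgoal :
      (fun k : ℕ =>
        (((F (xbar + tseq k • u + ((tseq k) ^ 2 / 2) • vseq k) - F xbar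
            - tseq k * clarkeD F xbar u) / ((tseq k) ^ 2 / 2) : ℝ) : EReal))
      = (fun k : ℕ => (A1 k : EReal)) + fun k : ℕ => ((A2 k : EReal) + (B k : EReal)) := by
    funext k
    show _ = ((A1 k : EReal) + ((A2 k : EReal) + (B k : EReal)))
    rw [hA1def, hA2def, hBdef]
    rw [← EReal.coe_add, ← EReal.coe_add, EReal.coe_eq_coe_iff]
    ring
  rw [hgoal]
  -- A1 tends to 0
  have htend1 : Tendsto (fun k => xbar + tseq k • u + ((tseq k)^2/2) • vseq k) atTop (𝓝 xbar) := by
    have : Tendsto (fun k => xbar + tseq k • u + ((tseq k)^2/2) • vseq k) atTop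
        (𝓝 (xbar + (0:ℝ) • u + (0:ℝ) • v)) :=
      ((tendsto_const_nhds.add (ht_lim.smul tendsto_const_nhds)).add (hs_lim.smul hv_lim))
    simpa using this
  have htend2 : Tendsto (fun k => xbar + tseq k • u + ((tseq k)^2/2) • v) atTop (𝓝 xbar) := by
    have : Tendsto (fun k => xbar + tseq k • u + ((tseq k)^2/2) • v) atTop
        (𝓝 (xbar + (0:ℝ) • u + (0:ℝ) • v)) :=
      ((tendsto_const_nhds.add (ht_lim.smul tendsto_const_nhds)).add
        (hs_lim.smul tendsto_const_nhds))
    simpa using this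
  have hA1bound : ∀ᶠ k in atTop, |A1 k| ≤ L * ‖vseq k - v‖ := by
    filter_upwards [mem_map.1 (htend1 hU), mem_map.1 (htend2 hU)] with k h1 h2
    have hnum : |F (xbar + tseq k • u + ((tseq k)^2/2) • vseq k)
        - F (xbar + tseq k • u + ((tseq k)^2/2) • v)|
        ≤ L * (((tseq k)^2/2) * ‖vseq k - v‖) := by
      have hl := hlip _ h1 _ h2
      have heq : (xbar + tseq k • u + ((tseq k)^2/2) • vseq k)
          - (xbar + tseq k • u + ((tseq k)^2/2) • v) = ((tseq k)^2/2) • (vseq k - v) := by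
        rw [smul_sub]; abel
      rw [heq, norm_smul, Real.norm_eq_abs, abs_of_pos (hs_pos k)] at hl
      linarith [hl]
    rw [hA1def]
    simp only []
    rw [abs_div, abs_of_pos (hs_pos k), div_le_iff₀ (hs_pos k)]
    calc |F (xbar + tseq k • u + ((tseq k)^2/2) • vseq k)
        - F (xbar + tseq k • u + ((tseq k)^2/2) • v)|
        ≤ L * (((tseq k)^2/2) * ‖vseq k - v‖) := hnum
      _ = L * ‖vseq k - v‖ * ((tseq k)^2/2) := by ring
  have hA1tend : Tendsto A1 atTop (𝓝 0) := by
    apply squeeze_zero_norm' hA1bound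
    have : Tendsto (fun k => L * ‖vseq k - v‖) atTop (𝓝 (L * ‖v - v‖)) :=
      tendsto_const_nhds.mul ((hv_lim.sub tendsto_const_nhds).norm)
    simpa using this
  have hA1lim : Filter.limsup (fun k => (A1 k : EReal)) atTop = (0:EReal) := by
    have h := (continuous_coe_real_ereal.tendsto (0:ℝ)).comp hA1tend
    have h2 := h.limsup_eq
    simpa [Function.comp_def] using h2
  -- the Lipschitz bound on the product filter, for direction v
  have hq : ∀ᶠ p : X × ℝ in (𝓝 xbar) ×ˢ (𝓝[>] (0:ℝ)),
      |(F (p.1 + p.2 • v) - F p.1) / p.2| ≤ L * ‖v‖ := by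
    set ε : ℝ := δ / (2 * (‖v‖ + 1)) with hε
    have hεpos : 0 < ε := by positivity
    have h1 : ∀ᶠ x in 𝓝 xbar, x ∈ Metric.ball xbar (δ/2) :=
      Metric.ball_mem_nhds xbar (by positivity)
    have h2 : ∀ᶠ t in 𝓝[>] (0:ℝ), t ∈ Ioo 0 ε := Ioo_mem_nhdsGT hεpos
    filter_upwards [h1.prod_mk h2] with p hp
    obtain ⟨hx, ht0, htε⟩ : _ ∧ _ ∧ _ := ⟨hp.1, hp.2.1, hp.2.2⟩
    have hxU : p.1 ∈ U := hball (by
      have := Metric.mem_ball.1 hx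
      exact Metric.mem_ball.2 (lt_of_lt_of_le this (by linarith)))
    have hdist : dist (p.1 + p.2 • v) xbar < δ := by
      have h3 : dist (p.1 + p.2 • v) xbar ≤ dist (p.1 + p.2 • v) p.1 + dist p.1 xbar :=
        dist_triangle _ _ _
      have h4 : dist (p.1 + p.2 • v) p.1 = p.2 * ‖v‖ := by
        rw [dist_eq_norm]
        simp [norm_smul, Real.norm_eq_abs, abs_of_pos ht0]
      have h5 : p.2 * ‖v‖ < ε * (‖v‖ + 1) := by
        have : p.2 * ‖v‖ ≤ p.2 * (‖v‖ + 1) := by nlinarith [norm_nonneg v, ht0.le]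
        have h6 : p.2 * (‖v‖ + 1) < ε * (‖v‖ + 1) := by
          apply mul_lt_mul_of_pos_right htε (by positivity)
        linarith
      have h7 : ε * (‖v‖ + 1) = δ / 2 := by
        rw [hε]; field_simp
      have := Metric.mem_ball.1 hx
      rw [h4] at h3
      linarith
    have hyU : p.1 + p.2 • v ∈ U := hball (Metric.mem_ball.2 hdist)
    have hl := hlip _ hyU _ hxU
    have heq : (p.1 + p.2 • v) - p.1 = p.2 • v := by abel
    rw [heq, norm_smul, Real.norm_eq_abs, abs_of_pos ht0] at hl
    rw [abs_div, abs_of_pos ht0, div_le_iff₀ ht0]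
    calc |F (p.1 + p.2 • v) - F p.1| ≤ L * (p.2 * ‖v‖) := hl
      _ = L * ‖v‖ * p.2 := by ring
  -- the map into the product filter
  have hφ : Tendsto (fun k => (xbar + tseq k • u, (tseq k)^2/2)) atTop
      ((𝓝 xbar) ×ˢ (𝓝[>] (0:ℝ))) := by
    apply Tendsto.prodMk
    · have : Tendsto (fun k => xbar + tseq k • u) atTop (𝓝 (xbar + (0:ℝ) • u)) :=
        tendsto_const_nhds.add (ht_lim.smul tendsto_const_nhds)
      simpa using this
    · exact tendsto_nhdsWithin_iff.2 ⟨hs_lim, Eventually.of_forall fun k => hs_pos k⟩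
  -- limsup of A2
  have hA2comp : (fun k => (A2 k : EReal)) =
      (fun p : X × ℝ => (((F (p.1 + p.2 • v) - F p.1) / p.2 : ℝ) : EReal)) ∘
        (fun k => (xbar + tseq k • u, (tseq k)^2/2)) := rfl
  have hA2le : Filter.limsup (fun k => (A2 k : EReal)) atTop ≤ (clarkeD F xbar v : EReal) := by
    rw [hA2comp, Filter.limsup_comp]
    refine le_trans (Filter.limsup_le_limsup_of_le hφ) ?_
    exact ereal_limsup_le_coe_limsup (hq.mono fun p hp => (abs_le.1 hp).2)
  have hA2seqbound : ∀ᶠ k in atTop, |A2 k| ≤ L * ‖v‖ := hφ.eventually hq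
  have hA2nebot : Filter.limsup (fun k => (A2 k : EReal)) atTop ≠ ⊥ := by
    have hlb : ∀ᶠ k in atTop, ((-(L * ‖v‖) : ℝ) : EReal) ≤ (A2 k : EReal) :=
      hA2seqbound.mono fun k hk => EReal.coe_le_coe_iff.2 (neg_le_of_abs_le hk)
    have hge := le_limsup_of_frequently_le hlb.frequently
    intro h
    rw [h, le_bot_iff] at hge
    exact EReal.coe_ne_bot _ hge
  have hA2netop : Filter.limsup (fun k => (A2 k : EReal)) atTop ≠ ⊤ :=
    (hA2le.trans_lt (EReal.coe_lt_top _)).ne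
  -- limsup of B
  have htInIoi : Tendsto tseq atTop (𝓝[>] (0:ℝ)) :=
    tendsto_nhdsWithin_iff.2 ⟨ht_lim, Eventually.of_forall fun k => ht_pos k⟩
  have hBcomp : (fun k => (B k : EReal)) =
      (fun t : ℝ =>
        (((F (xbar + t • u) - F xbar - t * clarkeD F xbar u) / (t ^ 2 / 2) : ℝ) : EReal)) ∘
        tseq := rfl
  have hBle : Filter.limsup (fun k => (B k : EReal)) atTop ≤ clarkeD2 F xbar u := by
    rw [hBcomp, Filter.limsup_comp, clarkeD2]
    exact Filter.limsup_le_limsup_of_le htInIoi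
  -- put everything together
  have hsum2 : Filter.limsup (fun k => ((A2 k : EReal) + (B k : EReal))) atTop
      ≤ Filter.limsup (fun k => (A2 k : EReal)) atTop
        + Filter.limsup (fun k => (B k : EReal)) atTop := by
    exact EReal.limsup_add_le (Or.inl hA2nebot) (Or.inl hA2netop)
  have hsum2' : Filter.limsup (fun k => ((A2 k : EReal) + (B k : EReal))) atTop
      ≤ (clarkeD F xbar v : EReal) + clarkeD2 F xbar u :=
    hsum2.trans (add_le_add hA2le hBle)
  have hsum1 : Filter.limsup
      ((fun k : ℕ => (A1 k : EReal)) + fun k : ℕ => ((A2 k : EReal) + (B k : EReal))) atTop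
      ≤ Filter.limsup (fun k => (A1 k : EReal)) atTop
        + Filter.limsup (fun k => ((A2 k : EReal) + (B k : EReal))) atTop :=
    EReal.limsup_add_le (Or.inl (by rw [hA1lim]; simp)) (Or.inl (by rw [hA1lim]; simp))
  refine hsum1.trans ?_
  rw [hA1lim, zero_add]
  exact hsum2'
end

section
/- Let x̄ ∈ Q_0 and u ∈ X. If the Zangwill second-order constraint qualification (ZSCQ) holds at x̄ for the direction u, i.e., B(x̄; u) ⊂ cl A(x̄; u), then the Abadie second-order constraint qualification (ASCQ) holds at x̄ for the direction u, i.e., L²(Q_0; x̄, u) ⊂ T²(Q_0; x̄, u). -/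
open Filter Topology Set

/-- The feasible set `Q₀ = {x : g j x ≤ 0 for all j}`. -/
def Q0set {X : Type*} {m : ℕ} (g : Fin m → X → ℝ) : Set X := {x | ∀ j, g j x ≤ 0}

/-- `(a, b) ≤_lex (0, 0)` where the second component is an extended real. -/
def lexLe (a : ℝ) (b : EReal) : Prop := a < 0 ∨ (a = 0 ∧ b ≤ 0)

/-- `(a, b) <_lex (0, 0)` where the second component is an extended real. -/
def lexLt (a : ℝ) (b : EReal) : Prop := a < 0 ∨ (a = 0 ∧ b < 0)

/-- The set `L²(Q₀; xbar, u)`. -/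
def L2Q0 {X : Type*} [NormedAddCommGroup X] [NormedSpace ℝ X] {m : ℕ}
    (g : Fin m → X → ℝ) (xbar u : X) : Set X :=
  {v | ∀ j, g j xbar = 0 →
    lexLe (clarkeD (g j) xbar u) ((clarkeD (g j) xbar v : EReal) + clarkeD2 (g j) xbar u)}

/-- The set `L₀²(Q₀; xbar, u)`. -/
def L2Q0strict {X : Type*} [NormedAddCommGroup X] [NormedSpace ℝ X] {m : ℕ}
    (g : Fin m → X → ℝ) (xbar u : X) : Set X :=
  {v | ∀ j, g j xbar = 0 →
    lexLt (clarkeD (g j) xbar u) ((clarkeD (g j) xbar v : EReal) + clarkeD2 (g j) xbar u)}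

/-- The set `L²(Q; xbar, u)`, where `Q = Q₀ ∩ {x : f i x ≤ f i xbar}`. -/
def L2Q {X : Type*} [NormedAddCommGroup X] [NormedSpace ℝ X] {p m : ℕ}
    (f : Fin p → X → ℝ) (g : Fin m → X → ℝ) (xbar u : X) : Set X :=
  {v | (∀ i, lexLe (clarkeD (f i) xbar u)
          ((clarkeD (f i) xbar v : EReal) + clarkeD2 (f i) xbar u)) ∧
       (∀ j, g j xbar = 0 →
          lexLe (clarkeD (g j) xbar u)
            ((clarkeD (g j) xbar v : EReal) + clarkeD2 (g j) xbar u))}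

/-- The second-order tangent set `T²(Ω; xbar, u)`. -/
def secondTangentSet {X : Type*} [NormedAddCommGroup X] [NormedSpace ℝ X]
    (Ω : Set X) (xbar u : X) : Set X :=
  {v | ∃ t : ℕ → ℝ, ∃ w : ℕ → X, (∀ k, 0 < t k) ∧ Tendsto t atTop (𝓝 0) ∧
       Tendsto w atTop (𝓝 v) ∧ ∀ k, xbar + (t k) • u + ((t k) ^ 2 / 2) • w k ∈ Ω}

/-- The (contingent) tangent cone `T(Ω; xbar)`. -/
def tangentCone' {X : Type*} [NormedAddCommGroup X] [NormedSpace ℝ X]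
    (Ω : Set X) (xbar : X) : Set X :=
  {d | ∃ t : ℕ → ℝ, ∃ w : ℕ → X, (∀ k, 0 < t k) ∧ Tendsto t atTop (𝓝 0) ∧
       Tendsto w atTop (𝓝 d) ∧ ∀ k, xbar + (t k) • w k ∈ Ω}

/-- The set `A(xbar; u)`. -/
def Aset {X : Type*} [NormedAddCommGroup X] [NormedSpace ℝ X] {m : ℕ}
    (g : Fin m → X → ℝ) (xbar u : X) : Set X :=
  {v | ∀ j, g j xbar = 0 → clarkeD (g j) xbar u = 0 →
    ∃ δ > 0, ∀ t ∈ Set.Ioo (0:ℝ) δ, g j (xbar + t • u + (t ^ 2 / 2) • v) ≤ 0}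

/-- The set `B(xbar; u)`. -/
def Bset {X : Type*} [NormedAddCommGroup X] [NormedSpace ℝ X] {m : ℕ}
    (g : Fin m → X → ℝ) (xbar u : X) : Set X :=
  {v | ∀ j, g j xbar = 0 → clarkeD (g j) xbar u = 0 →
    (clarkeD (g j) xbar v : EReal) + clarkeD2 (g j) xbar u ≤ 0}

/-- `u` is a critical direction of (VP) at `xbar`. -/
def IsCriticalDir {X : Type*} [NormedAddCommGroup X] [NormedSpace ℝ X] {p m : ℕ}
    (f : Fin p → X → ℝ) (g : Fin m → X → ℝ) (xbar u : X) : Prop :=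
  (∀ i, clarkeD (f i) xbar u ≤ 0) ∧ (∃ i, clarkeD (f i) xbar u = 0) ∧
  (∀ j, g j xbar = 0 → clarkeD (g j) xbar u ≤ 0)


private lemma tendsto_curve {X : Type*} [NormedAddCommGroup X] [NormedSpace ℝ X]
    (xbar u w : X) :
    Filter.Tendsto (fun t : ℝ => xbar + t • u + (t ^ 2 / 2) • w) (𝓝[>] 0) (𝓝 xbar) := by
  have h : Filter.Tendsto (fun t : ℝ => xbar + t • u + (t ^ 2 / 2) • w) (𝓝 0) (𝓝 xbar) := by
    have hc : Continuous fun t : ℝ => xbar + t • u + (t ^ 2 / 2) • w := by continuity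
    have := hc.tendsto 0
    simpa using this
  exact h.mono_left nhdsWithin_le_nhds

/-- Upper Dini-type estimate from the Clarke derivative, for locally Lipschitz functions. -/
private lemma clarke_upper {X : Type*} [NormedAddCommGroup X] [NormedSpace ℝ X]
    {g : X → ℝ} {xbar : X} (u : X) (hL : LocallyLipschitzAt g xbar) {b : ℝ}
    (hb : clarkeD g xbar u < b) :
    ∀ᶠ t in 𝓝[>] (0:ℝ), (g (xbar + t • u) - g xbar) / t < b := by
  obtain ⟨L, hL0, U, hU, hlip⟩ := hL
  obtain ⟨ε, hε, hball⟩ := Metric.mem_nhds_iff.1 hU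
  have hmem : ∀ᶠ p : X × ℝ in (𝓝 xbar) ×ˢ (𝓝[>] (0:ℝ)),
      p.1 ∈ Metric.ball xbar (ε/2) ∧ p.2 ∈ Set.Ioo (0:ℝ) (ε/(2*(‖u‖+1))) := by
    apply Filter.eventually_prod_iff.2
    refine ⟨_, Metric.ball_mem_nhds xbar (by linarith), _,
      Ioo_mem_nhdsGT_of_mem ⟨le_rfl, by positivity⟩, fun {x} hx {t} ht => ⟨hx, ht⟩⟩
  have hbdd : ∀ᶠ p : X × ℝ in (𝓝 xbar) ×ˢ (𝓝[>] (0:ℝ)),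
      (g (p.1 + p.2 • u) - g p.1) / p.2 ≤ L * ‖u‖ := by
    filter_upwards [hmem] with p hp
    obtain ⟨hp1, hp2⟩ := hp
    have hx1 : p.1 ∈ U := hball (by
      have : dist p.1 xbar < ε := lt_of_lt_of_le hp1 (by linarith)
      exact this)
    have hx2 : p.1 + p.2 • u ∈ U := by
      apply hball
      have h1 : dist (p.1 + p.2 • u) xbar ≤ dist p.1 xbar + ‖p.2 • u‖ := by
        rw [dist_eq_norm, dist_eq_norm]
        calc ‖p.1 + p.2 • u - xbar‖ = ‖(p.1 - xbar) + p.2 • u‖ := by congr 1; abel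
          _ ≤ ‖p.1 - xbar‖ + ‖p.2 • u‖ := norm_add_le _ _
      have h2 : ‖p.2 • u‖ = p.2 * ‖u‖ := by
        rw [norm_smul, Real.norm_eq_abs, abs_of_pos hp2.1]
      have h3 : p.2 * ‖u‖ ≤ (ε/(2*(‖u‖+1))) * (‖u‖+1) := by
        have hu1 : (0:ℝ) < ‖u‖ + 1 := by positivity
        have := mul_le_mul (le_of_lt hp2.2) (by linarith : ‖u‖ ≤ ‖u‖ + 1)
          (norm_nonneg u) (by positivity)
        linarith
      have h4 : (ε/(2*(‖u‖+1))) * (‖u‖+1) = ε/2 := by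
        field_simp
      have hd : dist p.1 xbar < ε/2 := hp1
      rw [Metric.mem_ball]
      calc dist (p.1 + p.2 • u) xbar ≤ dist p.1 xbar + ‖p.2 • u‖ := h1
        _ < ε/2 + ε/2 := by rw [h2]; have := h3; rw [h4] at this; linarith
        _ = ε := by ring
    have habs : |g (p.1 + p.2 • u) - g p.1| ≤ L * ‖p.2 • u‖ := by
      have := hlip _ hx2 _ hx1
      simpa using this
    have hnorm : ‖p.2 • u‖ = p.2 * ‖u‖ := by
      rw [norm_smul, Real.norm_eq_abs, abs_of_pos hp2.1]
    have hle : g (p.1 + p.2 • u) - g p.1 ≤ L * (p.2 * ‖u‖) := by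
      rw [hnorm] at habs
      exact le_trans (le_abs_self _) habs
    rw [div_le_iff₀ hp2.1]
    calc g (p.1 + p.2 • u) - g p.1 ≤ L * (p.2 * ‖u‖) := hle
      _ = L * ‖u‖ * p.2 := by ring
  have hev : ∀ᶠ p : X × ℝ in (𝓝 xbar) ×ˢ (𝓝[>] (0:ℝ)),
      (g (p.1 + p.2 • u) - g p.1) / p.2 < b :=
    eventually_lt_of_limsup_lt hb ⟨L * ‖u‖, by simpa [Filter.eventually_map] using hbdd⟩
  have ht : Filter.Tendsto (fun t : ℝ => ((xbar, t) : X × ℝ)) (𝓝[>] (0:ℝ))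
      ((𝓝 xbar) ×ˢ (𝓝[>] (0:ℝ))) :=
    Filter.Tendsto.prodMk tendsto_const_nhds Filter.tendsto_id
  exact ht.eventually hev

/-- Feasibility along the parabolic curve when the Clarke derivative is negative. -/
private lemma neg_deriv_feasible {X : Type*} [NormedAddCommGroup X] [NormedSpace ℝ X]
    {g : X → ℝ} {xbar : X} (u w : X) (hL : LocallyLipschitzAt g xbar)
    (h0 : g xbar = 0) (hc : clarkeD g xbar u < 0) :
    ∀ᶠ t in 𝓝[>] (0:ℝ), g (xbar + t • u + (t ^ 2 / 2) • w) ≤ 0 := by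
  set c := clarkeD g xbar u with hcdef
  obtain ⟨L, hL0, U, hU, hlip⟩ := hL
  have h1 : ∀ᶠ t in 𝓝[>] (0:ℝ), (g (xbar + t • u) - g xbar) / t < c/2 :=
    clarke_upper u ⟨L, hL0, U, hU, hlip⟩ (by linarith)
  have h2 : ∀ᶠ t in 𝓝[>] (0:ℝ), xbar + t • u ∈ U := by
    have := tendsto_curve xbar u (0:X)
    simp only [smul_zero, add_zero] at this
    exact this hU
  have h3 : ∀ᶠ t in 𝓝[>] (0:ℝ), xbar + t • u + (t ^ 2 / 2) • w ∈ U :=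
    (tendsto_curve xbar u w).eventually hU
  have h4 : ∀ᶠ t in 𝓝[>] (0:ℝ), L * t * ‖w‖ < -c := by
    have htd : Filter.Tendsto (fun t : ℝ => L * t * ‖w‖) (𝓝[>] (0:ℝ)) (𝓝 0) := by
      have : Filter.Tendsto (fun t : ℝ => L * t * ‖w‖) (𝓝 (0:ℝ)) (𝓝 (L * 0 * ‖w‖)) := by
        exact (continuous_const.mul continuous_id).mul continuous_const |>.tendsto 0
      simpa using this.mono_left nhdsWithin_le_nhds
    exact htd.eventually_lt_const (by linarith)
  have h5 : ∀ᶠ t in 𝓝[>] (0:ℝ), (0:ℝ) < t := eventually_mem_nhdsWithin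
  filter_upwards [h1, h2, h3, h4, h5] with t ht1 ht2 ht3 ht4 ht5
  have hga : g (xbar + t • u) < (c/2) * t := by
    rw [h0, sub_zero, div_lt_iff₀ ht5] at ht1
    linarith [ht1]
  have hlipb : |g (xbar + t • u + (t ^ 2 / 2) • w) - g (xbar + t • u)| ≤ L * ‖(t ^ 2 / 2) • w‖ := by
    have := hlip _ ht3 _ ht2
    simpa using this
  have hnorm : ‖(t ^ 2 / 2) • w‖ = (t ^ 2 / 2) * ‖w‖ := by
    rw [norm_smul, Real.norm_eq_abs, abs_of_pos (by positivity)]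
  have hle : g (xbar + t • u + (t ^ 2 / 2) • w) ≤ g (xbar + t • u) + L * ((t ^ 2 / 2) * ‖w‖) := by
    rw [hnorm] at hlipb
    have := le_abs_self (g (xbar + t • u + (t ^ 2 / 2) • w) - g (xbar + t • u))
    linarith [this.trans hlipb]
  nlinarith [hle, hga, ht4, ht5]

/-- Feasibility along the parabolic curve for inactive constraints. -/
private lemma inactive_feasible {X : Type*} [NormedAddCommGroup X] [NormedSpace ℝ X]
    {g : X → ℝ} {xbar : X} (u w : X) (hcont : ContinuousAt g xbar) (h0 : g xbar < 0) :
    ∀ᶠ t in 𝓝[>] (0:ℝ), g (xbar + t • u + (t ^ 2 / 2) • w) ≤ 0 := by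
  have := (hcont.tendsto.comp (tendsto_curve xbar u w)).eventually_lt_const h0
  exact this.mono fun t ht => le_of_lt ht

/-- Proposition 3.1 (i), first implication: (ZSCQ) ⇒ (ASCQ). -/
theorem zscq_implies_ascq
    {X : Type*} [NormedAddCommGroup X] [NormedSpace ℝ X] [CompleteSpace X]
    {p m : ℕ} (f : Fin p → X → ℝ) (g : Fin m → X → ℝ) (xbar : X)
    (hx : xbar ∈ Q0set g)
    (hf : ∀ i, LocallyLipschitzAt (f i) xbar)
    (hg : ∀ j, g j xbar = 0 → LocallyLipschitzAt (g j) xbar)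
    (hgc : ∀ j, g j xbar ≠ 0 → ContinuousAt (g j) xbar)
    (u : X)
    (hZ : Bset g xbar u ⊆ closure (Aset g xbar u)) :
    L2Q0 g xbar u ⊆ secondTangentSet (Q0set g) xbar u := by
  intro v hv
  have hvB : v ∈ Bset g xbar u := by
    intro j hj hc
    rcases hv j hj with h | ⟨_, h⟩
    · exact absurd hc (ne_of_lt h)
    · exact h
  obtain ⟨w, hwA, hwv⟩ := mem_closure_iff_seq_limit.1 (hZ hvB)
  have key : ∀ k : ℕ, ∀ᶠ t in 𝓝[>] (0:ℝ),
      ∀ j, g j (xbar + t • u + (t ^ 2 / 2) • w k) ≤ 0 := by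
    intro k
    rw [Filter.eventually_all]
    intro j
    by_cases hj : g j xbar = 0
    · rcases hv j hj with h | ⟨h, _⟩
      · exact neg_deriv_feasible u (w k) (hg j hj) hj h
      · obtain ⟨δ, hδ, hδ'⟩ := hwA k j hj h
        filter_upwards [Ioo_mem_nhdsGT_of_mem ⟨le_rfl, hδ⟩] with t ht
        exact hδ' t ht
    · exact inactive_feasible u (w k) (hgc j hj) (lt_of_le_of_ne (hx j) hj)
  have hsel : ∀ k : ℕ, ∃ t : ℝ, (0 < t ∧ t < 1/((k:ℝ)+1)) ∧
      ∀ j, g j (xbar + t • u + (t ^ 2 / 2) • w k) ≤ 0 := by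
    intro k
    have h1 : ∀ᶠ t in 𝓝[>] (0:ℝ), 0 < t ∧ t < 1/((k:ℝ)+1) := by
      filter_upwards [Ioo_mem_nhdsGT_of_mem
        (⟨le_rfl, by positivity⟩ : (0:ℝ) ∈ Set.Ico (0:ℝ) (1/((k:ℝ)+1)))] with t ht
      exact ⟨ht.1, ht.2⟩
    exact (h1.and (key k)).exists
  choose t ht htfeas using hsel
  refine ⟨t, w, fun k => (ht k).1, ?_, hwv, fun k => htfeas k⟩
  exact squeeze_zero (fun k => (ht k).1.le) (fun k => (ht k).2.le)
    tendsto_one_div_add_atTop_nhds_zero_nat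
end

section
/- Let x̄ ∈ Q_0 and u ∈ X. If the Mangasarian–Fromovitz second-order constraint qualification (MFSCQ) holds at x̄ for the direction u, i.e., L₀²(Q_0; x̄, u) ≠ ∅, then the Abadie second-order constraint qualification (ASCQ) holds at x̄ for the direction u, i.e., L²(Q_0; x̄, u) ⊂ T²(Q_0; x̄, u). -/
open Filter Topology Set

lemma clarke_bdd {X : Type*} [NormedAddCommGroup X] [NormedSpace ℝ X]
    {F : X → ℝ} {xbar : X} (hF : LocallyLipschitzAt F xbar) (d : X) :
    Filter.IsBoundedUnder (· ≤ ·) ((𝓝 xbar) ×ˢ (𝓝[>] (0:ℝ)))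
      (fun p : X × ℝ => (F (p.1 + p.2 • d) - F p.1) / p.2) := by
  obtain ⟨L, hL, U, hU, hlip⟩ := hF
  obtain ⟨r, hr, hball⟩ := Metric.mem_nhds_iff.1 hU
  apply Filter.isBoundedUnder_of_eventually_le (a := L * ‖d‖)
  have h1 : Metric.ball xbar (r/2) ∈ 𝓝 xbar := Metric.ball_mem_nhds _ (by positivity)
  have h2 : Set.Ioo (0:ℝ) (r / (2 * (‖d‖ + 1))) ∈ 𝓝[>] (0:ℝ) :=
    Ioo_mem_nhdsGT_of_mem ⟨le_refl 0, by positivity⟩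
  filter_upwards [Filter.prod_mem_prod h1 h2] with p hp
  obtain ⟨hp1, hp2⟩ := hp
  have hd : (0:ℝ) ≤ ‖d‖ := norm_nonneg d
  have hp2' : 0 < p.2 := hp2.1
  have hsd : p.2 * ‖d‖ < r / 2 := by
    have h4 : p.2 * (2 * (‖d‖ + 1)) < r := (lt_div_iff₀ (by positivity)).1 hp2.2
    nlinarith
  have hxU : p.1 ∈ U := hball (by
    have := mem_ball_iff_norm.1 hp1
    exact mem_ball_iff_norm.2 (by linarith))
  have hyU : p.1 + p.2 • d ∈ U := hball (by
    rw [mem_ball_iff_norm]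
    have : ‖p.1 + p.2 • d - xbar‖ ≤ ‖p.1 - xbar‖ + ‖p.2 • d‖ := by
      have := norm_add_le (p.1 - xbar) (p.2 • d)
      simpa [add_sub_right_comm] using this
    have h4 : ‖p.2 • d‖ = p.2 * ‖d‖ := by
      rw [norm_smul, Real.norm_eq_abs, abs_of_pos hp2']
    have h5 := mem_ball_iff_norm.1 hp1
    linarith [this, h4.le, h5])
  have := hlip _ hyU _ hxU
  have h6 : p.1 + p.2 • d - p.1 = p.2 • d := by abel
  rw [h6, norm_smul, Real.norm_eq_abs, abs_of_pos hp2'] at this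
  have h7 : F (p.1 + p.2 • d) - F p.1 ≤ L * (p.2 * ‖d‖) := by
    have := abs_le.1 this
    linarith [this.2]
  rw [div_le_iff₀ hp2']
  nlinarith

lemma clarke_est {X : Type*} [NormedAddCommGroup X] [NormedSpace ℝ X]
    {F : X → ℝ} {xbar : X} (hF : LocallyLipschitzAt F xbar) (d : X) {η : ℝ} (hη : 0 < η)
    {x : ℝ → X} {s : ℝ → ℝ} (hx : Tendsto x (𝓝[>] (0:ℝ)) (𝓝 xbar))
    (hs : Tendsto s (𝓝[>] (0:ℝ)) (𝓝[>] (0:ℝ))) :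
    ∀ᶠ t in 𝓝[>] (0:ℝ), F (x t + s t • d) - F (x t) ≤ s t * (clarkeD F xbar d + η) := by
  have hlt : Filter.limsup (fun p : X × ℝ => (F (p.1 + p.2 • d) - F p.1) / p.2)
      ((𝓝 xbar) ×ˢ (𝓝[>] (0:ℝ))) < clarkeD F xbar d + η := lt_add_of_pos_right _ hη
  have hev := Filter.eventually_lt_of_limsup_lt hlt (clarke_bdd hF d)
  have htend : Tendsto (fun t => (x t, s t)) (𝓝[>] (0:ℝ)) ((𝓝 xbar) ×ˢ (𝓝[>] (0:ℝ))) :=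
    hx.prodMk hs
  filter_upwards [htend.eventually hev, hs.eventually self_mem_nhdsWithin] with t h1 h2
  have h2' : (0:ℝ) < s t := h2
  rw [div_lt_iff₀ h2'] at h1
  nlinarith

lemma clarke2_est {X : Type*} [NormedAddCommGroup X] [NormedSpace ℝ X]
    {F : X → ℝ} {xbar u : X} {c η : ℝ} (hη : 0 < η)
    (hc : clarkeD2 F xbar u ≤ (c : EReal)) :
    ∀ᶠ t in 𝓝[>] (0:ℝ),
      F (xbar + t • u) - F xbar - t * clarkeD F xbar u ≤ t ^ 2 / 2 * (c + η) := by
  have hlt : clarkeD2 F xbar u < ((c + η : ℝ) : EReal) :=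
    lt_of_le_of_lt hc (by exact_mod_cast lt_add_of_pos_right c hη)
  have hev : ∀ᶠ t in 𝓝[>] (0:ℝ),
      (((F (xbar + t • u) - F xbar - t * clarkeD F xbar u) / (t ^ 2 / 2) : ℝ) : EReal)
        < ((c + η : ℝ) : EReal) :=
    Filter.eventually_lt_of_limsup_lt hlt
  filter_upwards [hev, self_mem_nhdsWithin] with t h1 h2
  have h2' : (0:ℝ) < t := h2
  rw [EReal.coe_lt_coe_iff] at h1
  rw [div_lt_iff₀ (by positivity)] at h1
  nlinarith

lemma case_neg {X : Type*} [NormedAddCommGroup X] [NormedSpace ℝ X]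
    {F : X → ℝ} {xbar : X} (hF : LocallyLipschitzAt F xbar) (hF0 : F xbar = 0) {u : X}
    (hu : clarkeD F xbar u < 0) (d : X) :
    ∀ᶠ t in 𝓝[>] (0:ℝ), F (xbar + t • u + (t ^ 2 / 2) • d) ≤ 0 := by
  set cu := clarkeD F xbar u with hcu
  -- first-order decrease along u
  have hlt : Filter.limsup (fun p : X × ℝ => (F (p.1 + p.2 • u) - F p.1) / p.2)
      ((𝓝 xbar) ×ˢ (𝓝[>] (0:ℝ))) < cu / 2 := by
    have : cu < cu / 2 := by linarith
    exact this
  have hev := Filter.eventually_lt_of_limsup_lt hlt (clarke_bdd hF u)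
  have htend : Tendsto (fun t : ℝ => (xbar, t)) (𝓝[>] (0:ℝ)) ((𝓝 xbar) ×ˢ (𝓝[>] (0:ℝ))) :=
    tendsto_const_nhds.prodMk tendsto_id
  have hev1 := htend.eventually hev
  -- Lipschitz estimate for the second-order shift
  obtain ⟨L, hL, U, hU, hlip⟩ := hF
  have hc1 : Tendsto (fun t : ℝ => xbar + t • u) (𝓝[>] (0:ℝ)) (𝓝 xbar) := by
    have hcont : Continuous fun t : ℝ => xbar + t • u := by continuity
    have h : Tendsto (fun t : ℝ => xbar + t • u) (𝓝[>] (0:ℝ)) (𝓝 (xbar + (0:ℝ) • u)) :=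
      (hcont.tendsto 0).mono_left nhdsWithin_le_nhds
    simpa using h
  have hc2 : Tendsto (fun t : ℝ => xbar + t • u + (t ^ 2 / 2) • d) (𝓝[>] (0:ℝ)) (𝓝 xbar) := by
    have hcont : Continuous fun t : ℝ => xbar + t • u + (t ^ 2 / 2) • d := by continuity
    have h : Tendsto (fun t : ℝ => xbar + t • u + (t ^ 2 / 2) • d) (𝓝[>] (0:ℝ))
        (𝓝 (xbar + (0:ℝ) • u + ((0:ℝ) ^ 2 / 2) • d)) :=
      (hcont.tendsto 0).mono_left nhdsWithin_le_nhds
    simpa using h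
  have hsmall : Set.Ioo (0:ℝ) ((-cu) / (L * ‖d‖ + 1)) ∈ 𝓝[>] (0:ℝ) :=
    Ioo_mem_nhdsGT_of_mem ⟨le_refl 0, div_pos (by linarith) (by positivity)⟩
  filter_upwards [hev1, hc1.eventually hU, hc2.eventually hU, hsmall,
    self_mem_nhdsWithin] with t h1 h2 h3 h4 h5
  have ht : (0:ℝ) < t := h5
  rw [div_lt_iff₀ ht] at h1
  -- h1 : F (xbar + t • u) - F xbar < cu / 2 * t
  have hlipest : F (xbar + t • u + (t ^ 2 / 2) • d) - F (xbar + t • u) ≤ L * (t ^ 2 / 2 * ‖d‖) := by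
    have := hlip _ h3 _ h2
    have heq : xbar + t • u + (t ^ 2 / 2) • d - (xbar + t • u) = (t ^ 2 / 2) • d := by abel
    rw [heq, norm_smul, Real.norm_eq_abs, abs_of_pos (by positivity : (0:ℝ) < t ^ 2 / 2)] at this
    have := abs_le.1 this
    linarith [this.2]
  have htb : t * (L * ‖d‖ + 1) < -cu := (lt_div_iff₀ (by positivity)).1 h4.2
  have hd : (0:ℝ) ≤ ‖d‖ := norm_nonneg d
  nlinarith [mul_pos ht ht, mul_nonneg (mul_nonneg hL hd) (mul_pos ht ht).le]

set_option maxHeartbeats 1000000 in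
lemma case_zero {X : Type*} [NormedAddCommGroup X] [NormedSpace ℝ X]
    {F : X → ℝ} {xbar : X} (hF : LocallyLipschitzAt F xbar) (hF0 : F xbar = 0) {u v w : X}
    (hu : clarkeD F xbar u = 0) {ε : ℝ} (hε0 : 0 < ε) (hε1 : ε < 1)
    (hv : (clarkeD F xbar v : EReal) + clarkeD2 F xbar u ≤ 0)
    (hw : (clarkeD F xbar w : EReal) + clarkeD2 F xbar u < 0) :
    ∀ᶠ t in 𝓝[>] (0:ℝ), F (xbar + t • u + (t ^ 2 / 2) • (v + ε • (w - v))) ≤ 0 := by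
  set a := clarkeD F xbar v with ha
  set b := clarkeD F xbar w with hb
  have htop : clarkeD2 F xbar u ≠ ⊤ := by
    intro h
    rw [h, EReal.add_top_of_ne_bot (EReal.coe_ne_bot b)] at hw
    exact not_top_lt hw
  obtain ⟨c, hc, hac, hbc⟩ : ∃ c : ℝ, clarkeD2 F xbar u ≤ (c : EReal) ∧ a + c ≤ 0 ∧ b + c < 0 := by
    by_cases hbot : clarkeD2 F xbar u = ⊥
    · refine ⟨min (-a) (-b - 1), by rw [hbot]; exact bot_le, ?_, ?_⟩
      · have := min_le_left (-a) (-b - 1); linarith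
      · have := min_le_right (-a) (-b - 1); linarith
    · lift clarkeD2 F xbar u to ℝ using ⟨htop, hbot⟩ with d hd
      refine ⟨d, le_refl _, ?_, ?_⟩
      · have h : ((a + d : ℝ) : EReal) ≤ ((0:ℝ) : EReal) := by
          rw [EReal.coe_add]; simpa using hv
        exact_mod_cast h
      · have h : ((b + d : ℝ) : EReal) < ((0:ℝ) : EReal) := by
          rw [EReal.coe_add]; simpa using hw
        exact_mod_cast h
  set η : ℝ := ε * (-(b + c)) / 4 with hηdef
  have hη : 0 < η := by
    apply div_pos _ (by norm_num)
    exact mul_pos hε0 (by linarith)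
  have E1 := clarke2_est hη hc
  have hc1 : Tendsto (fun t : ℝ => xbar + t • u) (𝓝[>] (0:ℝ)) (𝓝 xbar) := by
    have hcont : Continuous fun t : ℝ => xbar + t • u := by continuity
    have h : Tendsto (fun t : ℝ => xbar + t • u) (𝓝[>] (0:ℝ)) (𝓝 (xbar + (0:ℝ) • u)) :=
      (hcont.tendsto 0).mono_left nhdsWithin_le_nhds
    simpa using h
  have hs1 : Tendsto (fun t : ℝ => (1 - ε) * (t ^ 2 / 2)) (𝓝[>] (0:ℝ)) (𝓝[>] (0:ℝ)) := by
    rw [tendsto_nhdsWithin_iff]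
    constructor
    · have hcont : Continuous fun t : ℝ => (1 - ε) * (t ^ 2 / 2) := by continuity
      have h : Tendsto (fun t : ℝ => (1 - ε) * (t ^ 2 / 2)) (𝓝[>] (0:ℝ))
          (𝓝 ((1 - ε) * ((0:ℝ) ^ 2 / 2))) := (hcont.tendsto 0).mono_left nhdsWithin_le_nhds
      simpa using h
    · filter_upwards [self_mem_nhdsWithin] with t ht
      have ht' : (0:ℝ) < t := ht
      show (0:ℝ) < (1 - ε) * (t ^ 2 / 2)
      exact mul_pos (by linarith) (by positivity)
  have hc2 : Tendsto (fun t : ℝ => xbar + t • u + ((1 - ε) * (t ^ 2 / 2)) • v)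
      (𝓝[>] (0:ℝ)) (𝓝 xbar) := by
    have hcont : Continuous fun t : ℝ => xbar + t • u + ((1 - ε) * (t ^ 2 / 2)) • v := by
      continuity
    have h : Tendsto (fun t : ℝ => xbar + t • u + ((1 - ε) * (t ^ 2 / 2)) • v) (𝓝[>] (0:ℝ))
        (𝓝 (xbar + (0:ℝ) • u + ((1 - ε) * ((0:ℝ) ^ 2 / 2)) • v)) :=
      (hcont.tendsto 0).mono_left nhdsWithin_le_nhds
    simpa using h
  have hs2 : Tendsto (fun t : ℝ => ε * (t ^ 2 / 2)) (𝓝[>] (0:ℝ)) (𝓝[>] (0:ℝ)) := by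
    rw [tendsto_nhdsWithin_iff]
    constructor
    · have hcont : Continuous fun t : ℝ => ε * (t ^ 2 / 2) := by continuity
      have h : Tendsto (fun t : ℝ => ε * (t ^ 2 / 2)) (𝓝[>] (0:ℝ))
          (𝓝 (ε * ((0:ℝ) ^ 2 / 2))) := (hcont.tendsto 0).mono_left nhdsWithin_le_nhds
      simpa using h
    · filter_upwards [self_mem_nhdsWithin] with t ht
      have ht' : (0:ℝ) < t := ht
      show (0:ℝ) < ε * (t ^ 2 / 2)
      exact mul_pos hε0 (by positivity)
  have E2 := clarke_est hF v hη hc1 hs1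
  have E3 := clarke_est hF w hη hc2 hs2
  filter_upwards [E1, E2, E3, self_mem_nhdsWithin] with t h1 h2 h3 ht
  have ht' : (0:ℝ) < t := ht
  rw [hF0, hu, mul_zero, sub_zero, sub_zero] at h1
  have hdecomp : xbar + t • u + (t ^ 2 / 2) • (v + ε • (w - v))
      = xbar + t • u + ((1 - ε) * (t ^ 2 / 2)) • v + (ε * (t ^ 2 / 2)) • w := by
    module
  rw [hdecomp]
  have hT : (0:ℝ) < t ^ 2 / 2 := by positivity
  have k1 : (1 - ε) * (a + c) ≤ 0 := mul_nonpos_of_nonneg_of_nonpos (by linarith) hac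
  have k2 : ε * (b + c) < 0 := mul_neg_of_pos_of_neg hε0 hbc
  have hB : (c + η) + (1 - ε) * (a + η) + ε * (b + η) ≤ 0 := by
    rw [hηdef]; nlinarith [k1, k2]
  nlinarith [mul_nonpos_of_nonneg_of_nonpos hT.le hB, h1, h2, h3]

/-- Proposition 3.1 (ii): (MFSCQ) ⇒ (ASCQ). -/
theorem mfscq_implies_ascq
    {X : Type*} [NormedAddCommGroup X] [NormedSpace ℝ X] [CompleteSpace X]
    {p m : ℕ} (f : Fin p → X → ℝ) (g : Fin m → X → ℝ) (xbar : X)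
    (hx : xbar ∈ Q0set g)
    (hf : ∀ i, LocallyLipschitzAt (f i) xbar)
    (hg : ∀ j, g j xbar = 0 → LocallyLipschitzAt (g j) xbar)
    (hgc : ∀ j, g j xbar ≠ 0 → ContinuousAt (g j) xbar)
    (u : X)
    (hMF : (L2Q0strict g xbar u).Nonempty) :
    L2Q0 g xbar u ⊆ secondTangentSet (Q0set g) xbar u := by
  obtain ⟨w, hw⟩ := hMF
  intro v hv
  simp only [L2Q0, lexLe, Set.mem_setOf_eq] at hv
  simp only [L2Q0strict, lexLt, Set.mem_setOf_eq] at hw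
  have hεmem : ∀ k : ℕ, 0 < (1 / (k + 2 : ℝ)) ∧ (1 / (k + 2 : ℝ)) < 1 := by
    intro k
    constructor
    · positivity
    · rw [div_lt_one (by positivity)]
      have : (0:ℝ) ≤ (k:ℝ) := Nat.cast_nonneg k
      linarith
  have hev : ∀ k : ℕ, ∀ᶠ t in 𝓝[>] (0:ℝ),
      xbar + t • u + (t ^ 2 / 2) • (v + (1 / (k + 2 : ℝ)) • (w - v)) ∈ Q0set g := by
    intro k
    have hall : ∀ j, ∀ᶠ t in 𝓝[>] (0:ℝ),
        g j (xbar + t • u + (t ^ 2 / 2) • (v + (1 / (k + 2 : ℝ)) • (w - v))) ≤ 0 := by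
      intro j
      by_cases hj : g j xbar = 0
      · rcases hv j hj with hneg | ⟨hzero, hvle⟩
        · exact case_neg (hg j hj) hj hneg _
        · rcases hw j hj with hneg | ⟨_, hwlt⟩
          · exact case_neg (hg j hj) hj hneg _
          · exact case_zero (hg j hj) hj hzero (hεmem k).1 (hεmem k).2 hvle hwlt
      · have hlt : g j xbar < 0 := lt_of_le_of_ne (hx j) hj
        have hc2 : Tendsto
            (fun t : ℝ => xbar + t • u + (t ^ 2 / 2) • (v + (1 / (k + 2 : ℝ)) • (w - v)))
            (𝓝[>] (0:ℝ)) (𝓝 xbar) := by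
          have hcont : Continuous
              fun t : ℝ => xbar + t • u + (t ^ 2 / 2) • (v + (1 / (k + 2 : ℝ)) • (w - v)) := by
            continuity
          have h : Tendsto
              (fun t : ℝ => xbar + t • u + (t ^ 2 / 2) • (v + (1 / (k + 2 : ℝ)) • (w - v)))
              (𝓝[>] (0:ℝ))
              (𝓝 (xbar + (0:ℝ) • u + ((0:ℝ) ^ 2 / 2) • (v + (1 / (k + 2 : ℝ)) • (w - v)))) :=
            (hcont.tendsto 0).mono_left nhdsWithin_le_nhds
          simpa using h
        have hten := (hgc j hj).tendsto.comp hc2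
        exact (hten.eventually_lt_const hlt).mono fun t ht => le_of_lt ht
    exact (Filter.eventually_all.2 hall).mono fun t ht => ht
  choose δ hδ1 hδ2 using fun k => mem_nhdsGT_iff_exists_Ioo_subset.1 (hev k)
  have hδpos : ∀ k, 0 < δ k := fun k => hδ1 k
  refine ⟨fun k => min (δ k / 2) (1 / (k + 1 : ℝ)),
    fun k => v + (1 / (k + 2 : ℝ)) • (w - v), ?_, ?_, ?_, ?_⟩
  · intro k
    exact lt_min (by linarith [hδpos k]) (by positivity)
  · apply squeeze_zero (g := fun k : ℕ => 1 / (k + 1 : ℝ))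
      (fun k => (lt_min (by linarith [hδpos k]) (by positivity)).le)
      (fun k => min_le_right _ _)
    exact tendsto_one_div_add_atTop_nhds_zero_nat
  · have h0 : Tendsto (fun k : ℕ => 1 / (k + 2 : ℝ)) atTop (𝓝 0) := by
      apply squeeze_zero (g := fun k : ℕ => 1 / (k + 1 : ℝ))
        (fun k => by positivity)
        (fun k => by
          apply one_div_le_one_div_of_le (by positivity)
          have : (0:ℝ) ≤ (k:ℝ) := Nat.cast_nonneg k
          linarith)
      exact tendsto_one_div_add_atTop_nhds_zero_nat
    have h1 : Tendsto (fun k : ℕ => v + (1 / (k + 2 : ℝ)) • (w - v)) atTop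
        (𝓝 (v + (0:ℝ) • (w - v))) := tendsto_const_nhds.add (h0.smul_const (w - v))
    simpa using h1
  · intro k
    exact hδ2 k ⟨lt_min (by linarith [hδpos k]) (by positivity),
      lt_of_le_of_lt (min_le_left _ _) (by linarith [hδpos k])⟩
end

section
/- If x̄ ∈ Q_0 is a local weak efficient solution of (VP) and the weak Abadie regularity condition (WARC) holds at x̄, i.e., L(Q; x̄) := L²(Q; x̄, 0) ⊂ T(Q_0; x̄), then there is no u ∈ X satisfying f_i°(x̄, u) < 0 for all i ∈ I and g_j°(x̄, u) ≤ 0 for all j ∈ J(x̄). -/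
open Filter Topology Set

/-- `xbar` is a local weak efficient solution of (VP). -/
def LocalWeakEff {X : Type*} [NormedAddCommGroup X] {p m : ℕ}
    (f : Fin p → X → ℝ) (g : Fin m → X → ℝ) (xbar : X) : Prop :=
  ∃ U ∈ 𝓝 xbar, ∀ x ∈ U, x ∈ Q0set g → ¬ (∀ i, f i x < f i xbar)

/-- `xbar` is a local Geoffrion properly efficient solution of (VP). -/
def LocalGeoffrionEff {X : Type*} [NormedAddCommGroup X] {p m : ℕ}
    (f : Fin p → X → ℝ) (g : Fin m → X → ℝ) (xbar : X) : Prop :=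
  ∃ U ∈ 𝓝 xbar,
    (∀ x ∈ U, x ∈ Q0set g → (∀ i, f i x ≤ f i xbar) → (∀ i, f i x = f i xbar)) ∧
    ∃ M > (0:ℝ), ∀ i, ∀ x ∈ U, x ∈ Q0set g → f i x < f i xbar →
      ∃ j, f j xbar < f j x ∧ (f i xbar - f i x) / (f j x - f j xbar) ≤ M

lemma clarkeD_zero_dir {X : Type*} [NormedAddCommGroup X] [NormedSpace ℝ X]
    (F : X → ℝ) (xbar : X) : clarkeD F xbar 0 = 0 := by
  have : (fun q : X × ℝ => (F (q.1 + q.2 • (0:X)) - F q.1) / q.2) = fun _ => (0:ℝ) := by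
    funext q; simp
  rw [clarkeD, this, limsup_const]

lemma clarkeD2_zero_dir {X : Type*} [NormedAddCommGroup X] [NormedSpace ℝ X]
    (F : X → ℝ) (xbar : X) : clarkeD2 F xbar 0 = 0 := by
  have : (fun t : ℝ =>
      (((F (xbar + t • (0:X)) - F xbar - t * clarkeD F xbar 0) / (t ^ 2 / 2) : ℝ) : EReal))
      = fun _ => ((0:ℝ) : EReal) := by
    funext t; rw [clarkeD_zero_dir]; simp
  rw [clarkeD2, this, limsup_const, EReal.coe_zero]

/-- Key decrease lemma: if `F` is locally Lipschitz at `xbar` and `F°(xbar,u) < 0`, then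
along any tangent-cone data `(t_k, w_k)` with `t_k ↓ 0`, `w_k → u`, eventually
`F (xbar + t_k • w_k) < F xbar`. -/
lemma key_decrease {X : Type*} [NormedAddCommGroup X] [NormedSpace ℝ X]
    (F : X → ℝ) (xbar : X) (hF : LocallyLipschitzAt F xbar) {u : X}
    (hc : clarkeD F xbar u < 0)
    {t : ℕ → ℝ} {w : ℕ → X} (ht0 : ∀ k, 0 < t k) (ht : Tendsto t atTop (𝓝 0))
    (hw : Tendsto w atTop (𝓝 u)) :
    ∀ᶠ k in atTop, F (xbar + t k • w k) < F xbar := by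
  obtain ⟨L, hL0, U, hU, hlip⟩ := hF
  obtain ⟨r, hr, hball⟩ := Metric.mem_nhds_iff.1 hU
  set c := clarkeD F xbar u with hcdef
  have hδ : 0 < (r/2)/(‖u‖+1) := by positivity
  -- boundedness of the difference quotient near (xbar, 0+)
  have hbound : ∀ᶠ q : X × ℝ in (𝓝 xbar) ×ˢ (𝓝[>] (0:ℝ)),
      (F (q.1 + q.2 • u) - F q.1) / q.2 ≤ L * ‖u‖ := by
    have h1 : ∀ᶠ x in 𝓝 xbar, x ∈ Metric.ball xbar (r/2) :=
      Metric.ball_mem_nhds _ (by linarith)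
    have h2 : ∀ᶠ s in 𝓝[>] (0:ℝ), s ∈ Set.Ioo 0 ((r/2)/(‖u‖+1)) :=
      Ioo_mem_nhdsGT_of_mem ⟨le_refl 0, hδ⟩
    filter_upwards [h1.prod_mk h2] with q hq
    obtain ⟨hq1, hq2⟩ := hq
    have hq2' : 0 < q.2 := hq2.1
    have hxU : q.1 ∈ U := hball (Metric.ball_subset_ball (by linarith) hq1)
    have hxuU : q.1 + q.2 • u ∈ U := by
      apply hball
      rw [Metric.mem_ball, dist_eq_norm]
      have : q.1 + q.2 • u - xbar = (q.1 - xbar) + q.2 • u := by abel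
      rw [this]
      have h3 : ‖q.1 - xbar‖ < r/2 := by
        have := Metric.mem_ball.1 hq1; rwa [dist_eq_norm] at this
      have h4 : ‖q.2 • u‖ < r/2 := by
        rw [norm_smul, Real.norm_eq_abs, abs_of_pos hq2']
        have : q.2 * ‖u‖ < ((r/2)/(‖u‖+1)) * (‖u‖+1) := by
          have h5 : q.2 * ‖u‖ ≤ q.2 * (‖u‖+1) := by nlinarith [norm_nonneg u]
          have h6 : q.2 * (‖u‖+1) < ((r/2)/(‖u‖+1)) * (‖u‖+1) := by
            apply mul_lt_mul_of_pos_right hq2.2; positivity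
          linarith
        rwa [div_mul_cancel₀ _ (by positivity : ‖u‖+1 ≠ 0)] at this
      calc ‖(q.1 - xbar) + q.2 • u‖ ≤ ‖q.1 - xbar‖ + ‖q.2 • u‖ := norm_add_le _ _
        _ < r := by linarith
    have hab : |F (q.1 + q.2 • u) - F q.1| ≤ L * (q.2 * ‖u‖) := by
      have := hlip _ hxuU _ hxU
      simpa [norm_smul, Real.norm_eq_abs, abs_of_pos hq2'] using this
    rw [div_le_iff₀ hq2']
    have := le_of_abs_le hab
    nlinarith
  have hlt : ∀ᶠ q : X × ℝ in (𝓝 xbar) ×ˢ (𝓝[>] (0:ℝ)),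
      (F (q.1 + q.2 • u) - F q.1) / q.2 < c/2 := by
    apply eventually_lt_of_limsup_lt
    · show Filter.limsup _ _ < c/2
      have : Filter.limsup (fun q : X × ℝ => (F (q.1 + q.2 • u) - F q.1) / q.2)
          ((𝓝 xbar) ×ˢ (𝓝[>] (0:ℝ))) = c := rfl
      rw [this]; linarith
    · exact ⟨L * ‖u‖, eventually_map.2 hbound⟩
  rw [eventually_prod_iff] at hlt
  obtain ⟨pa, hpa, pb, hpb, himp⟩ := hlt
  have hpax : pa xbar := hpa.self_of_nhds
  have htW : Tendsto t atTop (𝓝[>] (0:ℝ)) := by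
    rw [tendsto_nhdsWithin_iff]
    exact ⟨ht, Eventually.of_forall fun k => ht0 k⟩
  have hpbk : ∀ᶠ k in atTop, pb (t k) := htW.eventually hpb
  set η := (-c/4)/(L+1) with hηdef
  have hη : 0 < η := by
    apply div_pos (by linarith) (by linarith)
  have hA : ∀ᶠ k in atTop, ‖w k - u‖ < η := by
    have h := hw.sub_const u
    rw [sub_self] at h
    exact NormedAddCommGroup.tendsto_nhds_zero.mp h η hη
  have hB : ∀ᶠ k in atTop, ‖t k • u‖ < r/2 := by
    have h : Tendsto (fun k => t k • u) atTop (𝓝 0) := by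
      have := ht.smul_const u
      rwa [zero_smul] at this
    exact NormedAddCommGroup.tendsto_nhds_zero.mp h _ (by linarith)
  have hC : ∀ᶠ k in atTop, ‖t k • w k‖ < r/2 := by
    have h : Tendsto (fun k => t k • w k) atTop (𝓝 0) := by
      have := ht.smul hw
      rwa [zero_smul] at this
    exact NormedAddCommGroup.tendsto_nhds_zero.mp h _ (by linarith)
  filter_upwards [hpbk, hA, hB, hC] with k hk1 hk2 hk3 hk4
  have hxuU : xbar + t k • u ∈ U := by
    apply hball
    rw [Metric.mem_ball, dist_eq_norm, add_sub_cancel_left]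
    linarith
  have hxwU : xbar + t k • w k ∈ U := by
    apply hball
    rw [Metric.mem_ball, dist_eq_norm, add_sub_cancel_left]
    linarith
  have h1 : F (xbar + t k • u) - F xbar < t k * (c/2) := by
    have h := himp hpax hk1
    rw [div_lt_iff₀ (ht0 k)] at h
    linarith [h]
  have h2 : F (xbar + t k • w k) - F (xbar + t k • u) ≤ L * (t k * ‖w k - u‖) := by
    have h := le_of_abs_le (hlip _ hxwU _ hxuU)
    have heq : xbar + t k • w k - (xbar + t k • u) = t k • (w k - u) := by
      rw [smul_sub]; abel
    rwa [heq, norm_smul, Real.norm_eq_abs, abs_of_pos (ht0 k)] at h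
  have h3 : L * ‖w k - u‖ < -c/4 := by
    have h4 : L * ‖w k - u‖ ≤ L * η := mul_le_mul_of_nonneg_left hk2.le hL0
    have h5 : L * η < -c/4 := by
      rw [hηdef, mul_div_assoc']
      rw [div_lt_iff₀ (by linarith : (0:ℝ) < L + 1)]
      nlinarith
    linarith
  have htk := ht0 k
  nlinarith [h2, h3, h1, mul_lt_mul_of_pos_left h3 htk]

/-- Theorem 4.1: if `xbar` is a local weak efficient solution of (VP) and
(WARC) holds at `xbar`, then the system `f_i°(xbar,u) < 0 (i ∈ I)`,
`g_j°(xbar,u) ≤ 0 (j ∈ J(xbar))` has no solution. -/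
theorem first_order_primal_kkt
    {X : Type*} [NormedAddCommGroup X] [NormedSpace ℝ X] [CompleteSpace X]
    {p m : ℕ} (f : Fin p → X → ℝ) (g : Fin m → X → ℝ) (xbar : X)
    (hx : xbar ∈ Q0set g)
    (hf : ∀ i, LocallyLipschitzAt (f i) xbar)
    (hg : ∀ j, g j xbar = 0 → LocallyLipschitzAt (g j) xbar)
    (hgc : ∀ j, g j xbar ≠ 0 → ContinuousAt (g j) xbar)
    (hweak : LocalWeakEff f g xbar)
    (hWARC : L2Q f g xbar 0 ⊆ tangentCone' (Q0set g) xbar) :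
    ¬ ∃ u : X, (∀ i, clarkeD (f i) xbar u < 0) ∧
        (∀ j, g j xbar = 0 → clarkeD (g j) xbar u ≤ 0) := by
  rintro ⟨u, hfu, hgu⟩
  have hu2 : u ∈ L2Q f g xbar 0 := by
    constructor
    · intro i
      right
      refine ⟨clarkeD_zero_dir _ _, ?_⟩
      rw [clarkeD2_zero_dir, add_zero]
      exact_mod_cast (hfu i).le
    · intro j hj
      right
      refine ⟨clarkeD_zero_dir _ _, ?_⟩
      rw [clarkeD2_zero_dir, add_zero]
      exact_mod_cast hgu j hj
  obtain ⟨t, w, ht0, ht, hw, hmem⟩ := hWARC hu2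
  obtain ⟨U, hU, hUw⟩ := hweak
  have hfe : ∀ᶠ k in atTop, ∀ i, f i (xbar + t k • w k) < f i xbar :=
    eventually_all.2 fun i => key_decrease (f i) xbar (hf i) (hfu i) ht0 ht hw
  have hxk : Tendsto (fun k => xbar + t k • w k) atTop (𝓝 xbar) := by
    have h : Tendsto (fun k => t k • w k) atTop (𝓝 0) := by
      have := ht.smul hw; rwa [zero_smul] at this
    have := tendsto_const_nhds.add h (f := fun _ : ℕ => xbar) (x := atTop)
    rwa [add_zero] at this
  have hUe : ∀ᶠ k in atTop, xbar + t k • w k ∈ U := hxk.eventually_mem hU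
  obtain ⟨k, hk1, hk2⟩ := (hfe.and hUe).exists
  exact hUw _ hk2 (hmem k) hk1
end

section
/- Let x̄ ∈ Q_0 be a local weak efficient solution of (VP), let u be a critical direction of (VP) at x̄, and suppose the weak Abadie second-order regularity condition (WASRC), i.e., L²(Q; x̄, u) ⊂ T²(Q_0; x̄, u), holds at x̄ for the direction u. Then there is no v ∈ X satisfying f_i°(x̄, v) + f_i°°(x̄, u) < 0 for all i ∈ I(x̄; u) and g_j°(x̄, v) + g_j°°(x̄, u) ≤ 0 for all j ∈ J(x̄; u). -/
open Filter Topology Set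

private lemma clarke_upper_est {X : Type*} [NormedAddCommGroup X] [NormedSpace ℝ X]
    {F : X → ℝ} {xbar : X} (hF : LocallyLipschitzAt F xbar) (v : X)
    {y : ℕ → X} {s : ℕ → ℝ} {w : ℕ → X}
    (hy : Tendsto y atTop (𝓝 xbar)) (hs0 : ∀ k, 0 < s k)
    (hs : Tendsto s atTop (𝓝 0)) (hw : Tendsto w atTop (𝓝 v))
    {ε : ℝ} (hε : 0 < ε) :
    ∀ᶠ k in atTop, (F (y k + s k • w k) - F (y k)) / s k < clarkeD F xbar v + ε := by
  obtain ⟨L, hL0, U, hU, hLip⟩ := hF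
  obtain ⟨δ, hδ, hball⟩ := Metric.mem_nhds_iff.1 hU
  set φ : X × ℝ → ℝ := fun q => (F (q.1 + q.2 • v) - F q.1) / q.2 with hφ
  have hc : 0 < δ / (2 * (‖v‖ + 1)) := by positivity
  have hevb : ∀ᶠ q : X × ℝ in (𝓝 xbar) ×ˢ (𝓝[>] (0:ℝ)), φ q ≤ L * ‖v‖ := by
    have hmem : (Metric.ball xbar (δ/2)) ×ˢ (Set.Ioo (0:ℝ) (δ / (2 * (‖v‖ + 1)))) ∈
        (𝓝 xbar) ×ˢ (𝓝[>] (0:ℝ)) :=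
      prod_mem_prod (Metric.ball_mem_nhds _ (by positivity))
        (Ioo_mem_nhdsGT_of_mem ⟨le_refl _, hc⟩)
    filter_upwards [hmem] with q hq
    rcases hq with ⟨hq1, hq2⟩
    have hq2' : 0 < q.2 := hq2.1
    have hxU : q.1 ∈ U :=
      hball (Metric.mem_ball.2 (lt_of_lt_of_le (Metric.mem_ball.1 hq1) (by linarith)))
    have hsmall : q.2 * ‖v‖ < δ/2 := by
      have h4 : q.2 * ‖v‖ ≤ q.2 * (‖v‖ + 1) := by nlinarith [hq2.1]
      have h5 : q.2 * (‖v‖+1) < (δ / (2*(‖v‖+1))) * (‖v‖+1) :=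
        mul_lt_mul_of_pos_right hq2.2 (by positivity)
      have h6 : (δ / (2*(‖v‖+1))) * (‖v‖+1) = δ/2 := by
        field_simp
      linarith
    have hx2U : q.1 + q.2 • v ∈ U := by
      apply hball
      rw [Metric.mem_ball, dist_eq_norm]
      have he : q.1 + q.2 • v - xbar = (q.1 - xbar) + q.2 • v := by abel
      rw [he]
      have h1 : ‖q.1 - xbar‖ < δ/2 := by rw [← dist_eq_norm]; exact hq1
      have h2 : ‖q.2 • v‖ = q.2 * ‖v‖ := by
        rw [norm_smul, Real.norm_eq_abs, abs_of_pos hq2']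
      calc ‖(q.1 - xbar) + q.2 • v‖ ≤ ‖q.1 - xbar‖ + ‖q.2 • v‖ := norm_add_le _ _
        _ < δ/2 + δ/2 := by rw [h2]; linarith
        _ = δ := by ring
    have hlip := hLip _ hx2U _ hxU
    have hnorm : ‖(q.1 + q.2 • v) - q.1‖ = q.2 * ‖v‖ := by
      simp [norm_smul, abs_of_pos hq2']
    rw [hnorm] at hlip
    have hle : F (q.1 + q.2 • v) - F q.1 ≤ L * (q.2 * ‖v‖) := le_trans (le_abs_self _) hlip
    show (F (q.1 + q.2 • v) - F q.1) / q.2 ≤ L * ‖v‖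
    rw [div_le_iff₀ hq2']
    calc F (q.1 + q.2 • v) - F q.1 ≤ L * (q.2 * ‖v‖) := hle
      _ = L * ‖v‖ * q.2 := by ring
  have hlt : Filter.limsup φ ((𝓝 xbar) ×ˢ (𝓝[>] (0:ℝ))) < clarkeD F xbar v + ε/2 := by
    have heq : Filter.limsup φ ((𝓝 xbar) ×ˢ (𝓝[>] (0:ℝ))) = clarkeD F xbar v := rfl
    rw [heq]; linarith
  have h1 := eventually_lt_of_limsup_lt hlt (isBoundedUnder_of_eventually_le hevb)
  have htt : Tendsto (fun k => (y k, s k)) atTop ((𝓝 xbar) ×ˢ (𝓝[>] (0:ℝ))) :=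
    hy.prodMk (tendsto_nhdsWithin_iff.2 ⟨hs, Eventually.of_forall hs0⟩)
  have h2 : ∀ᶠ k in atTop, (F (y k + s k • v) - F (y k)) / s k < clarkeD F xbar v + ε/2 :=
    htt.eventually h1
  have hy1 : Tendsto (fun k => y k + s k • w k) atTop (𝓝 xbar) := by
    have := hy.add (hs.smul hw); simpa using this
  have hy2 : Tendsto (fun k => y k + s k • v) atTop (𝓝 xbar) := by
    have := hy.add (hs.smul_const v); simpa using this
  have hm1 := hy1.eventually_mem hU
  have hm2 := hy2.eventually_mem hU
  have hwv : Tendsto (fun k => L * ‖w k - v‖) atTop (𝓝 0) := by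
    have h := tendsto_iff_norm_sub_tendsto_zero.1 hw
    have := h.const_mul L; simpa using this
  have hsm := hwv.eventually_lt_const (show (0:ℝ) < ε/2 by linarith)
  filter_upwards [h2, hm1, hm2, hsm] with k hk1 hk2 hk3 hk4
  have hdiff : |F (y k + s k • w k) - F (y k + s k • v)| ≤ L * (s k * ‖w k - v‖) := by
    have hlip := hLip _ hk2 _ hk3
    have hn : ‖(y k + s k • w k) - (y k + s k • v)‖ = s k * ‖w k - v‖ := by
      have he : (y k + s k • w k) - (y k + s k • v) = s k • (w k - v) := by
        rw [smul_sub]; abel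
      rw [he, norm_smul, Real.norm_eq_abs, abs_of_pos (hs0 k)]
    rw [hn] at hlip; exact hlip
  have hA : F (y k + s k • w k) - F (y k + s k • v) ≤ L * ‖w k - v‖ * s k :=
    le_trans (le_abs_self _) (le_trans hdiff (le_of_eq (by ring)))
  have hB : F (y k + s k • v) - F (y k) < (clarkeD F xbar v + ε/2) * s k := by
    rw [div_lt_iff₀ (hs0 k)] at hk1; exact hk1
  have hsk := hs0 k
  rw [div_lt_iff₀ hsk]
  have hC : L * ‖w k - v‖ * s k < (ε/2) * s k := mul_lt_mul_of_pos_right hk4 hsk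
  have hring : (clarkeD F xbar v + ε/2) * s k + (ε/2) * s k = (clarkeD F xbar v + ε) * s k := by
    ring
  linarith

private lemma clarke2_upper_est {X : Type*} [NormedAddCommGroup X] [NormedSpace ℝ X]
    (F : X → ℝ) (xbar u : X) {t : ℕ → ℝ} (ht0 : ∀ k, 0 < t k)
    (ht : Tendsto t atTop (𝓝 0)) {r : ℝ} (hr : clarkeD2 F xbar u < (r : EReal)) :
    ∀ᶠ k in atTop,
      (F (xbar + t k • u) - F xbar - t k * clarkeD F xbar u) / (t k ^ 2 / 2) < r := by
  have h1 : ∀ᶠ τ in 𝓝[>] (0:ℝ),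
      (((F (xbar + τ • u) - F xbar - τ * clarkeD F xbar u) / (τ ^ 2 / 2) : ℝ) : EReal)
        < (r : EReal) :=
    eventually_lt_of_limsup_lt hr
  have htt : Tendsto t atTop (𝓝[>] (0:ℝ)) :=
    tendsto_nhdsWithin_iff.2 ⟨ht, Eventually.of_forall ht0⟩
  filter_upwards [htt.eventually h1] with k hk
  exact_mod_cast hk

private lemma ereal_aux {a : ℝ} {D : EReal} (h : (a : EReal) + D < 0) :
    ∃ r : ℝ, D < (r : EReal) ∧ a + r < 0 := by
  induction D using EReal.rec with
  | bot => exact ⟨-a - 1, EReal.bot_lt_coe _, by linarith⟩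
  | coe d =>
      have hd : a + d < 0 := by exact_mod_cast h
      exact ⟨d + (-(a + d))/2, by exact_mod_cast (by linarith : d < d + (-(a+d))/2), by linarith⟩
  | top => rw [EReal.coe_add_top] at h; exact absurd h (by simp)
/-- Corollary 4.1: if `xbar` is a local weak efficient solution of (VP),
`u` is a critical direction and (WASRC) holds at `xbar` for `u`, then the system
`f_i°(xbar,v) + f_i°°(xbar,u) < 0 (i ∈ I(xbar;u))`,
`g_j°(xbar,v) + g_j°°(xbar,u) ≤ 0 (j ∈ J(xbar;u))` has no solution `v`. -/
theorem second_order_primal_kkt_weak_fixed_dir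
    {X : Type*} [NormedAddCommGroup X] [NormedSpace ℝ X] [CompleteSpace X]
    {p m : ℕ} (f : Fin p → X → ℝ) (g : Fin m → X → ℝ) (xbar : X)
    (hx : xbar ∈ Q0set g)
    (hf : ∀ i, LocallyLipschitzAt (f i) xbar)
    (hg : ∀ j, g j xbar = 0 → LocallyLipschitzAt (g j) xbar)
    (hgc : ∀ j, g j xbar ≠ 0 → ContinuousAt (g j) xbar)
    (hweak : LocalWeakEff f g xbar)
    (u : X) (hu : IsCriticalDir f g xbar u)
    (hWASRC : L2Q f g xbar u ⊆ secondTangentSet (Q0set g) xbar u) :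
    ¬ ∃ v : X,
      (∀ i, clarkeD (f i) xbar u = 0 →
        (clarkeD (f i) xbar v : EReal) + clarkeD2 (f i) xbar u < 0) ∧
      (∀ j, g j xbar = 0 → clarkeD (g j) xbar u = 0 →
        (clarkeD (g j) xbar v : EReal) + clarkeD2 (g j) xbar u ≤ 0) := by

  rintro ⟨v, hv1, hv2⟩
  -- v belongs to L²(Q; xbar, u)
  have hvL : v ∈ L2Q f g xbar u := by
    constructor
    · intro i
      rcases lt_or_eq_of_le (hu.1 i) with h | h
      · exact Or.inl h
      · exact Or.inr ⟨h, (hv1 i h).le⟩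
    · intro j hj
      rcases lt_or_eq_of_le (hu.2.2 j hj) with h | h
      · exact Or.inl h
      · exact Or.inr ⟨h, hv2 j hj h⟩
  obtain ⟨t, w, ht0, htlim, hwlim, hmem⟩ := hWASRC hvL
  obtain ⟨U, hU, hUweak⟩ := hweak
  set xk : ℕ → X := fun k => xbar + t k • u + (t k ^ 2 / 2) • w k with hxkdef
  have hts : Tendsto (fun k => t k ^ 2 / 2) atTop (𝓝 0) := by
    have := (htlim.mul htlim).div_const 2
    simpa [pow_two] using this
  have hts0 : ∀ k, 0 < t k ^ 2 / 2 := fun k => by have := ht0 k; positivity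
  have htu : Tendsto (fun k => xbar + t k • u) atTop (𝓝 xbar) := by
    have := (tendsto_const_nhds (x := xbar)).add (htlim.smul_const u)
    simpa using this
  have hxkt : Tendsto xk atTop (𝓝 xbar) := by
    have := htu.add (hts.smul hwlim)
    simpa [hxkdef, add_assoc] using this
  -- key estimates for each i
  have hkey : ∀ i, ∀ᶠ k in atTop, f i (xk k) < f i xbar := by
    intro i
    rcases lt_or_eq_of_le (hu.1 i) with hlt | heq
    · -- first-order case : f_i°(xbar, u) < 0
      set c := clarkeD (f i) xbar u with hc
      set C := clarkeD (f i) xbar v + 1 with hC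
      have hy0 : Tendsto (fun k => xbar + (t k ^ 2 / 2) • w k) atTop (𝓝 xbar) := by
        have := (tendsto_const_nhds (x := xbar)).add (hts.smul hwlim)
        simpa using this
      have hest1 := clarke_upper_est (hf i) u hy0 ht0 htlim (tendsto_const_nhds (x := u))
        (show (0:ℝ) < -c/2 by linarith)
      have hest2 := clarke_upper_est (hf i) v (tendsto_const_nhds (x := xbar)) hts0 hts hwlim
        (show (0:ℝ) < 1 by norm_num)
      have hsmall : ∀ᶠ k in atTop, C * (t k / 2) < -c/4 := by
        have h := (htlim.div_const 2).const_mul C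
        exact h.eventually_lt_const (by simpa using (show (0:ℝ) < -c/4 by linarith))
      filter_upwards [hest1, hest2, hsmall] with k hk1 hk2 hk3
      have htk := ht0 k
      have hq1 : f i ((xbar + (t k ^ 2 / 2) • w k) + t k • u)
          - f i (xbar + (t k ^ 2 / 2) • w k) < (c + -c/2) * t k := by
        rw [div_lt_iff₀ htk] at hk1; exact hk1
      have hq2 : f i (xbar + (t k ^ 2 / 2) • w k) - f i xbar < C * (t k ^ 2 / 2) := by
        rw [div_lt_iff₀ (hts0 k)] at hk2
        simpa [hC] using hk2
      have hpt : xk k = (xbar + (t k ^ 2 / 2) • w k) + t k • u := by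
        rw [hxkdef]; abel
      have hq3 : C * (t k ^ 2 / 2) < (-c/4) * t k := by
        have : C * (t k / 2) * t k < (-c/4) * t k := mul_lt_mul_of_pos_right hk3 htk
        calc C * (t k ^ 2 / 2) = C * (t k / 2) * t k := by ring
          _ < (-c/4) * t k := this
      have hneg : (c/4) * t k < 0 := mul_neg_of_neg_of_pos (by linarith) htk
      rw [hpt]
      have hsum : (c + -c/2) * t k + (-c/4) * t k = (c/4) * t k + 0 := by ring
      linarith
    · -- second-order case : f_i°(xbar, u) = 0
      set a := clarkeD (f i) xbar v with ha
      obtain ⟨r, hr1, hr2⟩ := ereal_aux (hv1 i heq)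
      have hest1 := clarke2_upper_est (f i) xbar u ht0 htlim hr1
      have hest2 := clarke_upper_est (hf i) v htu hts0 hts hwlim
        (show (0:ℝ) < -(a + r)/2 by linarith)
      filter_upwards [hest1, hest2] with k hk1 hk2
      have hsk := hts0 k
      have hq1 : f i (xbar + t k • u) - f i xbar < r * (t k ^ 2 / 2) := by
        rw [div_lt_iff₀ hsk] at hk1
        rw [heq] at hk1
        simpa using hk1
      have hq2 : f i ((xbar + t k • u) + (t k ^ 2 / 2) • w k) - f i (xbar + t k • u)
          < (a + -(a + r)/2) * (t k ^ 2 / 2) := by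
        rw [div_lt_iff₀ hsk] at hk2; exact hk2
      have hpt : xk k = (xbar + t k • u) + (t k ^ 2 / 2) • w k := by
        rw [hxkdef]
      have hneg : ((a + r)/2) * (t k ^ 2 / 2) < 0 :=
        mul_neg_of_neg_of_pos (by linarith) hsk
      rw [hpt]
      have hsum : r * (t k ^ 2 / 2) + (a + -(a + r)/2) * (t k ^ 2 / 2)
          = ((a + r)/2) * (t k ^ 2 / 2) := by ring
      linarith
  have hall : ∀ᶠ k in atTop, ∀ i, f i (xk k) < f i xbar := eventually_all.2 hkey
  have hUev : ∀ᶠ k in atTop, xk k ∈ U := hxkt.eventually_mem hU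
  obtain ⟨k, hk1, hk2⟩ := (hall.and hUev).exists
  exact hUweak _ hk2 (hmem k) hk1
end

section
/- Let x̄ ∈ Q_0 be a local Geoffrion properly efficient solution of (VP) and suppose the weak Abadie second-order regularity condition (WASRC), i.e., L²(Q; x̄, u) ⊂ T²(Q_0; x̄, u), holds at x̄ for every critical direction u. Then there is no pair (u, v) ∈ X × X satisfying: F²_i(x̄; u, v) ≤_lex (0, 0) for all i ∈ I, F²_i(x̄; u, v) <_lex (0, 0) for at least one i ∈ I(x̄; u), and G²_j(x̄; u, v) ≤_lex (0, 0) for all j ∈ J(x̄). -/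
open Filter Topology Set

section Helpers
variable {X : Type*} [NormedAddCommGroup X] [NormedSpace ℝ X]

lemma clarkeD_bound {F : X → ℝ} {xbar : X} (hF : LocallyLipschitzAt F xbar) (v : X) :
    ∃ C : ℝ, ∀ᶠ q : X × ℝ in (𝓝 xbar) ×ˢ (𝓝[>] (0:ℝ)),
      (F (q.1 + q.2 • v) - F q.1) / q.2 ≤ C := by
  obtain ⟨L, hL, U, hU, hLip⟩ := hF
  obtain ⟨r, hr, hball⟩ := Metric.mem_nhds_iff.mp hU
  refine ⟨L * ‖v‖, ?_⟩
  have h1 : Metric.ball xbar (r/2) ∈ 𝓝 xbar := Metric.ball_mem_nhds _ (by positivity)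
  have h2 : Set.Ioo (0:ℝ) (r / (2 * (‖v‖ + 1))) ∈ 𝓝[>] (0:ℝ) :=
    Ioo_mem_nhdsGT_of_mem ⟨le_refl _, by positivity⟩
  filter_upwards [Filter.prod_mem_prod h1 h2] with q hq
  obtain ⟨hx, hs⟩ := hq
  have hs0 : (0:ℝ) < q.2 := hs.1
  have hxb : ‖q.1 - xbar‖ < r/2 := mem_ball_iff_norm.mp hx
  have hxU : q.1 ∈ U := hball (mem_ball_iff_norm.mpr (by linarith))
  have hsv : ‖q.2 • v‖ < r/2 := by
    rw [norm_smul, Real.norm_of_nonneg hs0.le]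
    have h2' := hs.2
    have hv0 : (0:ℝ) ≤ ‖v‖ := norm_nonneg v
    have : q.2 * (‖v‖ + 1) < r / (2*(‖v‖+1)) * (‖v‖+1) := by nlinarith
    have he : r / (2*(‖v‖+1)) * (‖v‖+1) = r/2 := by field_simp
    nlinarith
  have hxvU : q.1 + q.2 • v ∈ U := by
    apply hball
    rw [mem_ball_iff_norm]
    calc ‖q.1 + q.2 • v - xbar‖ = ‖(q.1 - xbar) + q.2 • v‖ := by rw [add_sub_right_comm]
      _ ≤ ‖q.1 - xbar‖ + ‖q.2 • v‖ := norm_add_le _ _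
      _ < r/2 + r/2 := by linarith
      _ = r := by ring
  have hdiff : F (q.1 + q.2 • v) - F q.1 ≤ L * (q.2 * ‖v‖) := by
    have := hLip _ hxvU _ hxU
    have he : ‖q.1 + q.2 • v - q.1‖ = q.2 * ‖v‖ := by
      rw [add_sub_cancel_left, norm_smul, Real.norm_of_nonneg hs0.le]
    rw [he] at this
    exact (abs_le.mp this).2
  rw [div_le_iff₀ hs0]
  nlinarith

lemma clarkeD_ev_lt {F : X → ℝ} {xbar : X} (hF : LocallyLipschitzAt F xbar) (v : X)
    {c : ℝ} (hc : clarkeD F xbar v < c) :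
    ∀ᶠ q : X × ℝ in (𝓝 xbar) ×ˢ (𝓝[>] (0:ℝ)),
      (F (q.1 + q.2 • v) - F q.1) / q.2 < c := by
  obtain ⟨C, hC⟩ := clarkeD_bound hF v
  exact Filter.eventually_lt_of_limsup_lt hc ⟨C, by simpa [Filter.eventually_map] using hC⟩
end Helpers

section Keys
variable {X : Type*} [NormedAddCommGroup X] [NormedSpace ℝ X]

lemma key_quot {F : X → ℝ} {xbar u v : X} (hF : LocallyLipschitzAt F xbar)
    (hu0 : clarkeD F xbar u = 0)
    {t : ℕ → ℝ} {w : ℕ → X} (htpos : ∀ k, 0 < t k) (ht0 : Tendsto t atTop (𝓝 0))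
    (hwv : Tendsto w atTop (𝓝 v)) {c : ℝ}
    (hc : (clarkeD F xbar v : EReal) + clarkeD2 F xbar u < (c : EReal)) :
    ∀ᶠ k in atTop, F (xbar + t k • u + ((t k)^2/2) • w k) - F xbar < c * ((t k)^2/2) := by
  set r := clarkeD F xbar v with hr
  have h2lt : clarkeD2 F xbar u < ((c - r : ℝ) : EReal) := by
    by_contra h
    push_neg at h
    have hle : (c : EReal) ≤ (r : EReal) + clarkeD2 F xbar u := by
      calc (c : EReal) = ((r + (c - r) : ℝ) : EReal) := by norm_num
        _ = (r : EReal) + ((c - r : ℝ) : EReal) := by exact_mod_cast EReal.coe_add _ _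
        _ ≤ (r : EReal) + clarkeD2 F xbar u := add_le_add le_rfl h
    exact absurd (lt_of_le_of_lt hle hc) (lt_irrefl _)
  obtain ⟨b, hb1, hb2'⟩ := EReal.exists_between_coe_real h2lt
  have hb2 : b < c - r := EReal.coe_lt_coe_iff.mp hb2'
  set ε := (c - r - b)/3 with hε
  have hεpos : 0 < ε := by rw [hε]; linarith
  have htt : Tendsto t atTop (𝓝[>] (0:ℝ)) :=
    tendsto_nhdsWithin_iff.mpr ⟨ht0, Eventually.of_forall htpos⟩
  have E2' : ∀ᶠ s in 𝓝[>] (0:ℝ),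
      (((F (xbar + s • u) - F xbar - s * clarkeD F xbar u) / (s ^ 2 / 2) : ℝ) : EReal)
        < (b : EReal) := Filter.eventually_lt_of_limsup_lt hb1
  have E2 : ∀ᶠ k in atTop, (F (xbar + t k • u) - F xbar) / ((t k) ^ 2 / 2) < b := by
    filter_upwards [htt.eventually E2'] with k hk
    rw [hu0, mul_zero, sub_zero] at hk
    exact_mod_cast hk
  have hy : Tendsto (fun k => xbar + t k • u) atTop (𝓝 xbar) := by
    have h' : Tendsto (fun k => t k • u) atTop (𝓝 ((0:ℝ) • u)) := ht0.smul_const u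
    simpa using tendsto_const_nhds.add h'
  have hs2 : Tendsto (fun k => (t k)^2/2) atTop (𝓝 (0:ℝ)) := by
    simpa using ((ht0.pow 2).div_const 2)
  have hs : Tendsto (fun k => (t k)^2/2) atTop (𝓝[>] (0:ℝ)) :=
    tendsto_nhdsWithin_iff.mpr ⟨hs2, Eventually.of_forall fun k => Set.mem_Ioi.mpr (by have := htpos k; positivity)⟩
  have hpair : Tendsto (fun k => (xbar + t k • u, (t k)^2/2)) atTop
      ((𝓝 xbar) ×ˢ (𝓝[>] (0:ℝ))) := hy.prodMk hs
  have E1 : ∀ᶠ k in atTop,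
      (F ((xbar + t k • u) + ((t k)^2/2) • v) - F (xbar + t k • u)) / ((t k)^2/2) < r + ε :=
    hpair.eventually (clarkeD_ev_lt hF v (by linarith))
  obtain ⟨L, hL, U, hU, hLip⟩ := hF
  have hxk : Tendsto (fun k => xbar + t k • u + ((t k)^2/2) • w k) atTop (𝓝 xbar) := by
    have h2 : Tendsto (fun k => ((t k)^2/2) • w k) atTop (𝓝 ((0:ℝ) • v)) := hs2.smul hwv
    simpa using hy.add h2
  have hyv : Tendsto (fun k => (xbar + t k • u) + ((t k)^2/2) • v) atTop (𝓝 xbar) := by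
    have h2 : Tendsto (fun k => ((t k)^2/2) • v) atTop (𝓝 ((0:ℝ) • v)) := hs2.smul_const v
    simpa using hy.add h2
  have hwU : ∀ᶠ k in atTop, ‖w k - v‖ < ε / (L + 1) := by
    have hn : Tendsto (fun k => ‖w k - v‖) atTop (𝓝 0) := by
      have := (hwv.sub_const v).norm
      simpa using this
    exact hn.eventually (gt_mem_nhds (by positivity))
  filter_upwards [E1, E2, hwU, hxk.eventually_mem hU, hyv.eventually_mem hU] with k h1 h2 h3 h4 h5
  have hs0 : (0:ℝ) < (t k)^2/2 := by have := htpos k; positivity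
  have hlip1 : F (xbar + t k • u + ((t k)^2/2) • w k)
      - F ((xbar + t k • u) + ((t k)^2/2) • v) ≤ L * (((t k)^2/2) * ‖w k - v‖) := by
    have hd := hLip _ h4 _ h5
    have he : ‖(xbar + t k • u + ((t k)^2/2) • w k)
        - ((xbar + t k • u) + ((t k)^2/2) • v)‖ = ((t k)^2/2) * ‖w k - v‖ := by
      have : (xbar + t k • u + ((t k)^2/2) • w k) - ((xbar + t k • u) + ((t k)^2/2) • v)
          = ((t k)^2/2) • (w k - v) := by
        rw [smul_sub]; abel
      rw [this, norm_smul, Real.norm_of_nonneg hs0.le]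
    rw [he] at hd
    exact (abs_le.mp hd).2
  have hq1 : F ((xbar + t k • u) + ((t k)^2/2) • v) - F (xbar + t k • u)
      < (r + ε) * ((t k)^2/2) := (div_lt_iff₀ hs0).mp h1
  have hq2 : F (xbar + t k • u) - F xbar < b * ((t k)^2/2) := (div_lt_iff₀ hs0).mp h2
  have hcorr : L * (((t k)^2/2) * ‖w k - v‖) ≤ ε * ((t k)^2/2) := by
    have hnn : (0:ℝ) ≤ ‖w k - v‖ := norm_nonneg _
    have hd : ‖w k - v‖ ≤ ε / (L + 1) := h3.le
    have : L * ‖w k - v‖ ≤ ε := by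
      calc L * ‖w k - v‖ ≤ L * (ε / (L+1)) := by nlinarith
        _ ≤ ε := by rw [mul_div_assoc']; rw [div_le_iff₀ (by linarith)]; nlinarith
    nlinarith
  nlinarith

lemma key_quot1 {F : X → ℝ} {xbar u v : X} (hF : LocallyLipschitzAt F xbar)
    (hneg : clarkeD F xbar u < 0)
    {t : ℕ → ℝ} {w : ℕ → X} (htpos : ∀ k, 0 < t k) (ht0 : Tendsto t atTop (𝓝 0))
    (hwv : Tendsto w atTop (𝓝 v)) :
    ∀ᶠ k in atTop, F (xbar + t k • u + ((t k)^2/2) • w k) - F xbar < 0 := by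
  set a := clarkeD F xbar u with ha
  have htt : Tendsto t atTop (𝓝[>] (0:ℝ)) :=
    tendsto_nhdsWithin_iff.mpr ⟨ht0, Eventually.of_forall htpos⟩
  have hpair : Tendsto (fun k => (xbar, t k)) atTop ((𝓝 xbar) ×ˢ (𝓝[>] (0:ℝ))) :=
    tendsto_const_nhds.prodMk htt
  have E1 : ∀ᶠ k in atTop, (F (xbar + t k • u) - F xbar) / (t k) < a/2 :=
    hpair.eventually (clarkeD_ev_lt hF u (by linarith))
  obtain ⟨L, hL, U, hU, hLip⟩ := hF
  have hy : Tendsto (fun k => xbar + t k • u) atTop (𝓝 xbar) := by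
    have h' : Tendsto (fun k => t k • u) atTop (𝓝 ((0:ℝ) • u)) := ht0.smul_const u
    simpa using tendsto_const_nhds.add h'
  have hs2 : Tendsto (fun k => (t k)^2/2) atTop (𝓝 (0:ℝ)) := by
    simpa using ((ht0.pow 2).div_const 2)
  have hxk : Tendsto (fun k => xbar + t k • u + ((t k)^2/2) • w k) atTop (𝓝 xbar) := by
    have h2 : Tendsto (fun k => ((t k)^2/2) • w k) atTop (𝓝 ((0:ℝ) • v)) := hs2.smul hwv
    simpa using hy.add h2
  have hwb : ∀ᶠ k in atTop, ‖w k‖ < ‖v‖ + 1 :=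
    hwv.norm.eventually (gt_mem_nhds (by linarith [norm_nonneg v]))
  have hsm : ∀ᶠ k in atTop, L * (t k / 2) * (‖v‖ + 1) < -a/4 := by
    have hl : Tendsto (fun k => L * (t k / 2) * (‖v‖ + 1)) atTop (𝓝 0) := by
      have := ((ht0.div_const 2).const_mul L).mul_const (‖v‖ + 1)
      simpa using this
    exact hl.eventually (gt_mem_nhds (by linarith))
  filter_upwards [E1, hwb, hsm, hxk.eventually_mem hU, hy.eventually_mem hU] with k h1 h2 h3 h4 h5
  have ht0k := htpos k
  have hlip1 : F (xbar + t k • u + ((t k)^2/2) • w k) - F (xbar + t k • u)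
      ≤ L * (((t k)^2/2) * ‖w k‖) := by
    have hd := hLip _ h4 _ h5
    have he : ‖(xbar + t k • u + ((t k)^2/2) • w k) - (xbar + t k • u)‖
        = ((t k)^2/2) * ‖w k‖ := by
      rw [add_sub_cancel_left, norm_smul, Real.norm_of_nonneg (by positivity)]
    rw [he] at hd
    exact (abs_le.mp hd).2
  have hq1 : F (xbar + t k • u) - F xbar < (a/2) * t k := (div_lt_iff₀ ht0k).mp h1
  have hcorr : L * (((t k)^2/2) * ‖w k‖) < (-a/4) * t k := by
    have h' : L * (((t k)^2/2) * ‖w k‖) = (L * (t k / 2) * ‖w k‖) * t k := by ring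
    rw [h']
    have hnn : (0:ℝ) ≤ ‖w k‖ := norm_nonneg _
    have : L * (t k / 2) * ‖w k‖ ≤ L * (t k / 2) * (‖v‖ + 1) :=
      mul_le_mul_of_nonneg_left h2.le (by positivity)
    nlinarith
  nlinarith

end Keys

/-- Theorem 5.1: if `xbar` is a local Geoffrion properly efficient solution
of (VP) and (WASRC) holds at `xbar` for every critical direction, then the system
`F²_i(xbar; u, v) ≤_lex (0,0) (i ∈ I)`, `F²_i(xbar; u, v) <_lex (0,0)` for at least one
`i ∈ I(xbar; u)`, `G²_j(xbar; u, v) ≤_lex (0,0) (j ∈ J(xbar))` has no solution `(u, v)`. -/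
theorem strong_second_order_primal_kkt
    {X : Type*} [NormedAddCommGroup X] [NormedSpace ℝ X] [CompleteSpace X]
    {p m : ℕ} (f : Fin p → X → ℝ) (g : Fin m → X → ℝ) (xbar : X)
    (hx : xbar ∈ Q0set g)
    (hf : ∀ i, LocallyLipschitzAt (f i) xbar)
    (hg : ∀ j, g j xbar = 0 → LocallyLipschitzAt (g j) xbar)
    (hgc : ∀ j, g j xbar ≠ 0 → ContinuousAt (g j) xbar)
    (hgeo : LocalGeoffrionEff f g xbar)
    (hWASRC : ∀ u : X, IsCriticalDir f g xbar u →
      L2Q f g xbar u ⊆ secondTangentSet (Q0set g) xbar u) :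
    ¬ ∃ u v : X,
      (∀ i, lexLe (clarkeD (f i) xbar u)
        ((clarkeD (f i) xbar v : EReal) + clarkeD2 (f i) xbar u)) ∧
      (∃ i, clarkeD (f i) xbar u = 0 ∧
        lexLt (clarkeD (f i) xbar u)
          ((clarkeD (f i) xbar v : EReal) + clarkeD2 (f i) xbar u)) ∧
      (∀ j, g j xbar = 0 → lexLe (clarkeD (g j) xbar u)
        ((clarkeD (g j) xbar v : EReal) + clarkeD2 (g j) xbar u)) := by
  
  rintro ⟨u, v, h1, ⟨i0, hi0eq, hi0lt⟩, h3⟩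
  have hcrit : IsCriticalDir f g xbar u := by
    refine ⟨fun i => ?_, ⟨i0, hi0eq⟩, fun j hj => ?_⟩
    · rcases h1 i with h | ⟨h, _⟩
      · exact h.le
      · exact h.le
    · rcases h3 j hj with h | ⟨h, _⟩
      · exact h.le
      · exact h.le
  obtain ⟨t, w, htpos, ht0, hwv, hmem⟩ := hWASRC u hcrit ⟨h1, h3⟩
  have hsum0 : (clarkeD (f i0) xbar v : EReal) + clarkeD2 (f i0) xbar u < 0 := by
    rcases hi0lt with h | ⟨_, h⟩
    · rw [hi0eq] at h; exact absurd h (lt_irrefl _)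
    · exact h
  obtain ⟨c, hc1, hc2'⟩ := EReal.exists_between_coe_real hsum0
  have hc2 : c < 0 := by exact_mod_cast hc2'
  obtain ⟨U, hU, _, M, hM, hMgeo⟩ := hgeo
  set κ := -c / M with hκdef
  have hκ : 0 < κ := div_pos (by linarith) hM
  have hA : ∀ᶠ k in atTop, f i0 (xbar + t k • u + ((t k)^2/2) • w k) - f i0 xbar
      < c * ((t k)^2/2) := key_quot (hf i0) hi0eq htpos ht0 hwv hc1
  have hB : ∀ᶠ k in atTop, ∀ j, f j (xbar + t k • u + ((t k)^2/2) • w k) - f j xbar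
      < κ * ((t k)^2/2) := by
    rw [eventually_all]
    intro j
    rcases lt_or_eq_of_le (hcrit.1 j) with hlt | heq
    · filter_upwards [key_quot1 (hf j) hlt htpos ht0 hwv] with k hk
      have hpos : 0 < κ * ((t k)^2/2) := by
        have := htpos k; positivity
      linarith
    · have heq' : clarkeD (f j) xbar u = 0 := heq
      have hsle : (clarkeD (f j) xbar v : EReal) + clarkeD2 (f j) xbar u ≤ 0 := by
        rcases h1 j with h | ⟨_, h⟩
        · rw [heq'] at h; exact absurd h (lt_irrefl _)
        · exact h
      have hlt' : (clarkeD (f j) xbar v : EReal) + clarkeD2 (f j) xbar u < (κ : EReal) :=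
        lt_of_le_of_lt hsle (by exact_mod_cast hκ)
      exact key_quot (hf j) heq' htpos ht0 hwv hlt'
  have hy : Tendsto (fun k => xbar + t k • u) atTop (𝓝 xbar) := by
    have h' : Tendsto (fun k => t k • u) atTop (𝓝 ((0:ℝ) • u)) := ht0.smul_const u
    simpa using tendsto_const_nhds.add h'
  have hs2 : Tendsto (fun k => (t k)^2/2) atTop (𝓝 (0:ℝ)) := by
    simpa using ((ht0.pow 2).div_const 2)
  have hxk : Tendsto (fun k => xbar + t k • u + ((t k)^2/2) • w k) atTop (𝓝 xbar) := by
    have h2 : Tendsto (fun k => ((t k)^2/2) • w k) atTop (𝓝 ((0:ℝ) • v)) := hs2.smul hwv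
    simpa using hy.add h2
  have hUk : ∀ᶠ k in atTop, (xbar + t k • u + ((t k)^2/2) • w k) ∈ U := hxk.eventually_mem hU
  obtain ⟨k, hAk, hBk, hUkk⟩ := (hA.and (hB.and hUk)).exists
  set x := xbar + t k • u + ((t k)^2/2) • w k with hxdef
  have hs0 : (0:ℝ) < (t k)^2/2 := by have := htpos k; positivity
  have hfi0 : f i0 x < f i0 xbar := by nlinarith
  obtain ⟨j, hj1, hj2⟩ := hMgeo i0 x hUkk (hmem k) hfi0
  have hD : (0:ℝ) < f j x - f j xbar := by linarith
  have hratio : f i0 xbar - f i0 x ≤ M * (f j x - f j xbar) := by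
    rw [div_le_iff₀ hD] at hj2; linarith
  have h5 : -c * ((t k)^2/2) < f i0 xbar - f i0 x := by linarith
  have h6 : κ * ((t k)^2/2) < f j x - f j xbar := by
    rw [hκdef]
    rw [div_mul_eq_mul_div, div_lt_iff₀ hM]
    nlinarith
  have := hBk j
  linarith
end

section
/- Let x̄ ∈ Q_0 be a local Geoffrion properly efficient solution of (VP), let u be a critical direction of (VP) at x̄, and suppose the weak Abadie second-order regularity condition (WASRC), i.e., L²(Q; x̄, u) ⊂ T²(Q_0; x̄, u), holds at x̄ for the direction u. Then there is no v ∈ X satisfying: f_i°(x̄, v) + f_i°°(x̄, u) ≤ 0 for all i ∈ I(x̄; u), f_i°(x̄, v) + f_i°°(x̄, u) < 0 for at least one i ∈ I(x̄; u), and g_j°(x̄, v) + g_j°°(x̄, u) ≤ 0 for all j ∈ J(x̄; u). -/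
open Filter Topology Set

section ClarkeHelpers

variable {X : Type*} [NormedAddCommGroup X] [NormedSpace ℝ X]

private lemma lip_ball {F : X → ℝ} {xbar : X} (hF : LocallyLipschitzAt F xbar) :
    ∃ L : ℝ, 0 ≤ L ∧ ∃ r : ℝ, 0 < r ∧
      ∀ x ∈ Metric.ball xbar r, ∀ y ∈ Metric.ball xbar r, |F x - F y| ≤ L * ‖x - y‖ := by
  obtain ⟨L, hL, U, hU, hlip⟩ := hF
  obtain ⟨r, hr, hball⟩ := Metric.mem_nhds_iff.mp hU
  exact ⟨L, hL, r, hr, fun x hx y hy => hlip x (hball hx) y (hball hy)⟩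

private lemma bddq {F : X → ℝ} {xbar : X} (hF : LocallyLipschitzAt F xbar) (d : X) :
    Filter.IsBoundedUnder (· ≤ ·) ((𝓝 xbar) ×ˢ (𝓝[>] (0:ℝ)))
      (fun p : X × ℝ => (F (p.1 + p.2 • d) - F p.1) / p.2) := by
  obtain ⟨L, hL, r, hr, hlip⟩ := lip_ball hF
  apply isBoundedUnder_of_eventually_le (a := L * ‖d‖)
  have h1 : Metric.ball xbar (r / 2) ∈ 𝓝 xbar := Metric.ball_mem_nhds _ (by linarith)
  have h2 : Set.Ioo (0:ℝ) (r / (2 * (‖d‖ + 1))) ∈ 𝓝[>] (0:ℝ) := by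
    apply Ioo_mem_nhdsGT (by positivity)
  filter_upwards [Filter.prod_mem_prod h1 h2] with p hp
  obtain ⟨hpx, hpt⟩ := hp
  have htpos : (0:ℝ) < p.2 := hpt.1
  have hdn : (0:ℝ) ≤ ‖d‖ := norm_nonneg d
  have hy : p.1 + p.2 • d ∈ Metric.ball xbar r := by
    rw [Metric.mem_ball, dist_eq_norm] at *
    have : ‖p.1 + p.2 • d - xbar‖ ≤ ‖p.1 - xbar‖ + ‖p.2 • d‖ := by
      have := norm_add_le (p.1 - xbar) (p.2 • d)
      simpa [add_sub_right_comm] using this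
    have hsm : ‖p.2 • d‖ = p.2 * ‖d‖ := by
      rw [norm_smul, Real.norm_eq_abs, abs_of_pos htpos]
    have hb : p.2 * ‖d‖ ≤ r / 2 := by
      have h3 : p.2 * ‖d‖ ≤ (r / (2 * (‖d‖ + 1))) * ‖d‖ :=
        mul_le_mul_of_nonneg_right hpt.2.le hdn
      have h4 : (r / (2 * (‖d‖ + 1))) * ‖d‖ ≤ r / 2 := by
        rw [div_mul_eq_mul_div, div_le_div_iff₀ (by positivity) (by norm_num)]
        nlinarith
      linarith
    have hx2 : ‖p.1 - xbar‖ < r / 2 := hpx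
    linarith [this, hsm ▸ hb]
  have hx : p.1 ∈ Metric.ball xbar r := by
    rw [Metric.mem_ball] at *; linarith [hpx]
  have hlipb := hlip _ hy _ hx
  have hnorm : ‖p.1 + p.2 • d - p.1‖ = p.2 * ‖d‖ := by
    simp [norm_smul, Real.norm_eq_abs, abs_of_pos htpos]
  rw [hnorm] at hlipb
  rw [div_le_iff₀ htpos]
  calc F (p.1 + p.2 • d) - F p.1 ≤ |F (p.1 + p.2 • d) - F p.1| := le_abs_self _
    _ ≤ L * (p.2 * ‖d‖) := hlipb
    _ = L * ‖d‖ * p.2 := by ring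

private lemma ev_q_lt {F : X → ℝ} {xbar : X} (hF : LocallyLipschitzAt F xbar) (d : X) {c : ℝ}
    (hc : clarkeD F xbar d < c) :
    ∀ᶠ p in (𝓝 xbar) ×ˢ (𝓝[>] (0:ℝ)), (F (p.1 + p.2 • d) - F p.1) / p.2 < c :=
  Filter.eventually_lt_of_limsup_lt hc (bddq hF d)

variable {t : ℕ → ℝ} {w : ℕ → X} {v : X}

private lemma htt (ht : ∀ k, 0 < t k) (ht0 : Tendsto t atTop (𝓝 0)) :
    Tendsto t atTop (𝓝[>] (0:ℝ)) :=
  tendsto_nhdsWithin_of_tendsto_nhds_of_eventually_within _ ht0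
    (Filter.Eventually.of_forall ht)

private lemma hs0 (ht0 : Tendsto t atTop (𝓝 0)) :
    Tendsto (fun k => t k ^ 2 / 2) atTop (𝓝 0) := by
  have : Tendsto (fun k => t k * t k / 2) atTop (𝓝 (0 * 0 / 2)) :=
    (ht0.mul ht0).div_const 2
  simpa [sq] using this

private lemma hss (ht : ∀ k, 0 < t k) (ht0 : Tendsto t atTop (𝓝 0)) :
    Tendsto (fun k => t k ^ 2 / 2) atTop (𝓝[>] (0:ℝ)) :=
  tendsto_nhdsWithin_of_tendsto_nhds_of_eventually_within _ (hs0 ht0)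
    (Filter.Eventually.of_forall fun k => Set.mem_Ioi.mpr (by have := ht k; positivity))

private lemma hytend (xbar u : X) (ht0 : Tendsto t atTop (𝓝 0)) :
    Tendsto (fun k => xbar + t k • u) atTop (𝓝 xbar) := by
  have : Tendsto (fun k => xbar + t k • u) atTop (𝓝 (xbar + (0:ℝ) • u)) :=
    tendsto_const_nhds.add (ht0.smul_const u)
  simpa using this

private lemma hxtend (xbar u : X) (ht0 : Tendsto t atTop (𝓝 0)) (hw : Tendsto w atTop (𝓝 v)) :
    Tendsto (fun k => xbar + t k • u + (t k ^ 2 / 2) • w k) atTop (𝓝 xbar) := by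
  have h2 : Tendsto (fun k => (t k ^ 2 / 2) • w k) atTop (𝓝 ((0:ℝ) • v)) :=
    (hs0 ht0).smul hw
  have := (hytend xbar u ht0 (t := t)).add h2
  simpa using this

/-- If `F°(xbar, u) < 0` then eventually `F (x_k) < F xbar`. -/
private lemma ev_lt_first {F : X → ℝ} {xbar : X} (hF : LocallyLipschitzAt F xbar) (u : X)
    (ht : ∀ k, 0 < t k) (ht0 : Tendsto t atTop (𝓝 0)) (hw : Tendsto w atTop (𝓝 v))
    (hneg : clarkeD F xbar u < 0) :
    ∀ᶠ k in atTop, F (xbar + t k • u + (t k ^ 2 / 2) • w k) < F xbar := by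
  obtain ⟨L, hL, r, hr, hlip⟩ := lip_ball hF
  set a := clarkeD F xbar u with ha
  have hev : ∀ᶠ p in (𝓝 xbar) ×ˢ (𝓝[>] (0:ℝ)),
      (F (p.1 + p.2 • u) - F p.1) / p.2 < a / 2 := ev_q_lt hF u (by linarith)
  have hpull := ((tendsto_const_nhds.prodMk (htt ht ht0)).eventually hev :)
  -- bound the perturbation term
  have hxb : ∀ᶠ k in atTop,
      xbar + t k • u + (t k ^ 2 / 2) • w k ∈ Metric.ball xbar r :=
    (hxtend xbar u ht0 hw).eventually (Metric.ball_mem_nhds _ hr)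
  have hyb : ∀ᶠ k in atTop, xbar + t k • u ∈ Metric.ball xbar r :=
    (hytend xbar u ht0 (t := t)).eventually (Metric.ball_mem_nhds _ hr)
  have hwl : Tendsto (fun k => L * (t k / 2) * ‖w k‖) atTop (𝓝 0) := by
    have : Tendsto (fun k => L * (t k / 2) * ‖w k‖) atTop (𝓝 (L * (0 / 2) * ‖v‖)) :=
      (tendsto_const_nhds.mul (ht0.div_const 2)).mul hw.norm
    simpa using this
  have hsmall : ∀ᶠ k in atTop, L * (t k / 2) * ‖w k‖ < -a / 4 :=
    hwl.eventually (gt_mem_nhds (by linarith))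
  filter_upwards [hpull, hxb, hyb, hsmall] with k h1 h2 h3 h4
  have htk := ht k
  have h1' : F (xbar + t k • u) - F xbar < a / 2 * t k := by
    have := (div_lt_iff₀ htk).mp h1
    linarith [this]
  have hlipb := hlip _ h2 _ h3
  have hnorm : ‖xbar + t k • u + (t k ^ 2 / 2) • w k - (xbar + t k • u)‖
      = t k ^ 2 / 2 * ‖w k‖ := by
    simp [norm_smul, Real.norm_eq_abs, abs_of_nonneg (by positivity : (0:ℝ) ≤ t k ^ 2 / 2)]
  rw [hnorm] at hlipb
  have hstep : F (xbar + t k • u + (t k ^ 2 / 2) • w k) - F (xbar + t k • u)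
      ≤ L * (t k ^ 2 / 2 * ‖w k‖) := le_trans (le_abs_self _) hlipb
  nlinarith [h4, htk, h1', hstep]

/-- Key second-order estimate. -/
private lemma key_second {F : X → ℝ} {xbar : X} (hF : LocallyLipschitzAt F xbar) (u : X)
    (ht : ∀ k, 0 < t k) (ht0 : Tendsto t atTop (𝓝 0)) (hw : Tendsto w atTop (𝓝 v))
    (ha : clarkeD F xbar u = 0) {c : ℝ}
    (hc : (clarkeD F xbar v : EReal) + clarkeD2 F xbar u < (c : EReal)) :
    ∀ᶠ k in atTop,
      F (xbar + t k • u + (t k ^ 2 / 2) • w k) - F xbar < c * (t k ^ 2 / 2) := by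
  obtain ⟨L, hL, r, hr, hlip⟩ := lip_ball hF
  set b := clarkeD F xbar v with hb
  set D := clarkeD2 F xbar u with hD
  -- find a real d with D < d and b + d < c
  obtain ⟨d, hd1, hd2⟩ : ∃ d : ℝ, D < (d : EReal) ∧ b + d < c := by
    have hDlt : D < ((c - b : ℝ) : EReal) := by
      rw [EReal.coe_sub]
      refine (EReal.lt_sub_iff_add_lt (Or.inl (EReal.coe_ne_bot b))
        (Or.inl (EReal.coe_ne_top b))).mpr ?_
      rw [add_comm]; exact hc
    obtain ⟨d, hd1, hd2⟩ := EReal.exists_between_coe_real hDlt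
    exact ⟨d, hd1, by linarith [EReal.coe_lt_coe_iff.mp hd2]⟩
  set ε := c - b - d with hε
  have hεpos : 0 < ε := by linarith
  -- first piece: from D < d
  have hev1 : ∀ᶠ s in 𝓝[>] (0:ℝ),
      (((F (xbar + s • u) - F xbar - s * clarkeD F xbar u) / (s ^ 2 / 2) : ℝ) : EReal)
        < (d : EReal) :=
    Filter.eventually_lt_of_limsup_lt hd1
  have hev1' := (htt ht ht0).eventually hev1
  -- second piece: from limsup q_v = b < b + ε/2
  have hev2 : ∀ᶠ p in (𝓝 xbar) ×ˢ (𝓝[>] (0:ℝ)),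
      (F (p.1 + p.2 • v) - F p.1) / p.2 < b + ε / 2 := ev_q_lt hF v (by linarith)
  have hpull2 := (((hytend xbar u ht0 (t := t)).prodMk (hss ht ht0)).eventually hev2 :)
  -- ball memberships
  have hxb : ∀ᶠ k in atTop,
      xbar + t k • u + (t k ^ 2 / 2) • w k ∈ Metric.ball xbar r :=
    (hxtend xbar u ht0 hw).eventually (Metric.ball_mem_nhds _ hr)
  have hvb : ∀ᶠ k in atTop,
      xbar + t k • u + (t k ^ 2 / 2) • v ∈ Metric.ball xbar r :=
    (hxtend xbar u ht0 tendsto_const_nhds).eventually (Metric.ball_mem_nhds _ hr)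
  have hwv : ∀ᶠ k in atTop, ‖w k - v‖ < ε / (2 * (L + 1)) := by
    have h0 : Tendsto (fun k => w k - v) atTop (𝓝 (v - v)) := hw.sub tendsto_const_nhds
    have : Tendsto (fun k => ‖w k - v‖) atTop (𝓝 0) := by
      have := h0.norm
      simpa using this
    exact this.eventually (gt_mem_nhds (by positivity))
  filter_upwards [hev1', hpull2, hxb, hvb, hwv] with k h1 h2 h3 h4 h5
  have htk := ht k
  have hsk : (0:ℝ) < t k ^ 2 / 2 := by positivity
  -- piece 1 in real form
  have h1r : F (xbar + t k • u) - F xbar < d * (t k ^ 2 / 2) := by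
    rw [EReal.coe_lt_coe_iff] at h1
    rw [ha, mul_zero, sub_zero] at h1
    have := (div_lt_iff₀ hsk).mp h1
    linarith
  -- piece 2
  have h2r : F (xbar + t k • u + (t k ^ 2 / 2) • v) - F (xbar + t k • u)
      < (b + ε / 2) * (t k ^ 2 / 2) := by
    have := (div_lt_iff₀ hsk).mp h2
    linarith
  -- Lipschitz between w and v points
  have hlipb := hlip _ h3 _ h4
  have hnorm : ‖xbar + t k • u + (t k ^ 2 / 2) • w k
      - (xbar + t k • u + (t k ^ 2 / 2) • v)‖ = t k ^ 2 / 2 * ‖w k - v‖ := by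
    rw [show xbar + t k • u + (t k ^ 2 / 2) • w k - (xbar + t k • u + (t k ^ 2 / 2) • v)
        = (t k ^ 2 / 2) • (w k - v) by rw [smul_sub]; abel]
    simp [norm_smul, Real.norm_eq_abs, abs_of_nonneg (by positivity : (0:ℝ) ≤ t k ^ 2 / 2)]
  rw [hnorm] at hlipb
  have h3r : F (xbar + t k • u + (t k ^ 2 / 2) • w k)
      - F (xbar + t k • u + (t k ^ 2 / 2) • v) ≤ L * (t k ^ 2 / 2 * ‖w k - v‖) :=
    le_trans (le_abs_self _) hlipb
  have hnb : (0:ℝ) ≤ ‖w k - v‖ := norm_nonneg _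
  have h5' : L * ‖w k - v‖ ≤ ε / 2 := by
    have h6 : L * ‖w k - v‖ ≤ L * (ε / (2 * (L + 1))) :=
      mul_le_mul_of_nonneg_left h5.le hL
    have h7 : L * (ε / (2 * (L + 1))) ≤ ε / 2 := by
      rw [mul_div_assoc'] at *
      rw [div_le_div_iff₀ (by positivity) (by norm_num)]
      nlinarith
    linarith
  have hfin : L * (t k ^ 2 / 2 * ‖w k - v‖) ≤ ε / 2 * (t k ^ 2 / 2) := by
    have : L * (t k ^ 2 / 2 * ‖w k - v‖) = (L * ‖w k - v‖) * (t k ^ 2 / 2) := by ring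
    rw [this]
    exact mul_le_mul_of_nonneg_right h5' hsk.le
  have : F (xbar + t k • u + (t k ^ 2 / 2) • w k) - F xbar
      < (d + b + ε / 2 + ε / 2) * (t k ^ 2 / 2) := by nlinarith
  calc F (xbar + t k • u + (t k ^ 2 / 2) • w k) - F xbar
      < (d + b + ε / 2 + ε / 2) * (t k ^ 2 / 2) := this
    _ = c * (t k ^ 2 / 2) := by rw [hε]; ring_nf

end ClarkeHelpers

/-- Corollary 5.1: if `xbar` is a local Geoffrion properly efficient solution
of (VP), `u` is a critical direction, and (WASRC) holds at `xbar` for `u`, then the system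
`f_i°(xbar,v) + f_i°°(xbar,u) ≤ 0 (i ∈ I(xbar;u))`, with strict inequality for at least one
`i ∈ I(xbar;u)`, and `g_j°(xbar,v) + g_j°°(xbar,u) ≤ 0 (j ∈ J(xbar;u))`,
has no solution `v`. -/
theorem strong_second_order_primal_kkt_fixed_dir
    {X : Type*} [NormedAddCommGroup X] [NormedSpace ℝ X] [CompleteSpace X]
    {p m : ℕ} (f : Fin p → X → ℝ) (g : Fin m → X → ℝ) (xbar : X)
    (hx : xbar ∈ Q0set g)
    (hf : ∀ i, LocallyLipschitzAt (f i) xbar)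
    (hg : ∀ j, g j xbar = 0 → LocallyLipschitzAt (g j) xbar)
    (hgc : ∀ j, g j xbar ≠ 0 → ContinuousAt (g j) xbar)
    (hgeo : LocalGeoffrionEff f g xbar)
    (u : X) (hu : IsCriticalDir f g xbar u)
    (hWASRC : L2Q f g xbar u ⊆ secondTangentSet (Q0set g) xbar u) :
    ¬ ∃ v : X,
      (∀ i, clarkeD (f i) xbar u = 0 →
        (clarkeD (f i) xbar v : EReal) + clarkeD2 (f i) xbar u ≤ 0) ∧
      (∃ i, clarkeD (f i) xbar u = 0 ∧
        (clarkeD (f i) xbar v : EReal) + clarkeD2 (f i) xbar u < 0) ∧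
      (∀ j, g j xbar = 0 → clarkeD (g j) xbar u = 0 →
        (clarkeD (g j) xbar v : EReal) + clarkeD2 (g j) xbar u ≤ 0) := by
  rintro ⟨v, hv1, ⟨i0, hi0a, hi0s⟩, hv3⟩
  -- `v` belongs to `L²(Q; xbar, u)`
  have hvL2 : v ∈ L2Q f g xbar u := by
    constructor
    · intro i
      rcases (hu.1 i).lt_or_eq with h | h
      · exact Or.inl h
      · exact Or.inr ⟨h, hv1 i h⟩
    · intro j hj
      rcases (hu.2.2 j hj).lt_or_eq with h | h
      · exact Or.inl h
      · exact Or.inr ⟨h, hv3 j hj h⟩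
  obtain ⟨t, w, ht, ht0, hw, hmem⟩ := hWASRC hvL2
  obtain ⟨U, hU, hEff, M, hM, hMprop⟩ := hgeo
  set xk : ℕ → X := fun k => xbar + t k • u + (t k ^ 2 / 2) • w k with hxkdef
  -- pick a real c < 0 above the strict second-order quantity at i0
  have h0 : (clarkeD (f i0) xbar v : EReal) + clarkeD2 (f i0) xbar u < ((0:ℝ) : EReal) := by
    simpa using hi0s
  obtain ⟨c, hc1, hc2'⟩ := EReal.exists_between_coe_real h0
  have hc2 : c < 0 := EReal.coe_lt_coe_iff.mp hc2'
  have hkey0 : ∀ᶠ k in atTop, f i0 (xk k) - f i0 xbar < c * (t k ^ 2 / 2) :=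
    key_second (hf i0) u ht ht0 hw hi0a hc1
  have hUx : ∀ᶠ k in atTop, xk k ∈ U :=
    (hxtend xbar u ht0 hw).eventually_mem hU
  -- eventually Geoffrion gives an index j with positive difference and bounded ratio
  have hPconc : ∀ᶠ k in atTop, ∃ j, f j xbar < f j (xk k) ∧
      (f i0 xbar - f i0 (xk k)) / (f j (xk k) - f j xbar) ≤ M := by
    filter_upwards [hUx, hkey0] with k h1 h2
    have hsk : (0:ℝ) < t k ^ 2 / 2 := by have := ht k; positivity
    have hlt : f i0 (xk k) < f i0 xbar := by nlinarith
    exact hMprop i0 (xk k) h1 (hmem k) hlt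
  -- pigeonhole over the finite index set
  have hpig : ∃ j : Fin p, ∃ᶠ k in atTop, f j xbar < f j (xk k) ∧
      (f i0 xbar - f i0 (xk k)) / (f j (xk k) - f j xbar) ≤ M := by
    by_contra h
    push_neg at h
    have h' : ∀ j : Fin p, ∀ᶠ k in atTop, ¬(f j xbar < f j (xk k) ∧
        (f i0 xbar - f i0 (xk k)) / (f j (xk k) - f j xbar) ≤ M) := by
      intro j
      exact Filter.not_frequently.mp (by simpa using h j)
    have hall := Filter.eventually_all.mpr h'
    obtain ⟨k, hk1, hk2⟩ := (hPconc.and hall).exists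
    obtain ⟨j, hj⟩ := hk1
    exact hk2 j hj
  obtain ⟨j0, hfreq⟩ := hpig
  -- the index j0 must satisfy f_{j0}°(xbar, u) = 0
  have haj : clarkeD (f j0) xbar u = 0 := by
    by_contra hne
    have hlt : clarkeD (f j0) xbar u < 0 := (hu.1 j0).lt_of_ne hne
    have hev := ev_lt_first (hf j0) u ht ht0 hw hlt
    obtain ⟨k, hk1, hk2⟩ := (hfreq.and_eventually hev).exists
    exact absurd hk2 (not_lt.mpr hk1.1.le)
  have hsumj : (clarkeD (f j0) xbar v : EReal) + clarkeD2 (f j0) xbar u ≤ 0 := hv1 j0 haj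
  set ε' : ℝ := -c / (2 * M) with hε'
  have hε'pos : 0 < ε' := div_pos (by linarith) (by linarith)
  have hcε : (clarkeD (f j0) xbar v : EReal) + clarkeD2 (f j0) xbar u < (ε' : EReal) :=
    lt_of_le_of_lt hsumj (EReal.coe_pos.mpr hε'pos)
  have hkeyj : ∀ᶠ k in atTop, f j0 (xk k) - f j0 xbar < ε' * (t k ^ 2 / 2) :=
    key_second (hf j0) u ht ht0 hw haj hcε
  obtain ⟨k, hPk, hkj, hki⟩ := (hfreq.and_eventually (hkeyj.and hkey0)).exists
  obtain ⟨hgt, hratio⟩ := hPk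
  have hsk : (0:ℝ) < t k ^ 2 / 2 := by have := ht k; positivity
  have hDpos : 0 < f j0 (xk k) - f j0 xbar := by linarith
  have hnum : f i0 xbar - f i0 (xk k) ≤ M * (f j0 (xk k) - f j0 xbar) :=
    (div_le_iff₀ hDpos).mp hratio
  have hMne : M ≠ 0 := ne_of_gt hM
  have hMe : M * ε' = -c / 2 := by
    rw [hε']
    field_simp
  have hstep : M * (f j0 (xk k) - f j0 xbar) < M * (ε' * (t k ^ 2 / 2)) :=
    mul_lt_mul_of_pos_left hkj hM
  nlinarith [hki, hnum, hstep, hMe, hsk, hc2]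
end

section
/- Let Q_0 := {(x_1, x_2) ∈ ℝ² : |x_1| + x_2³ − x_1² ≤ 0}. Then the tangent cone to Q_0 at the origin is T(Q_0; (0,0)) = {(v_1, v_2) ∈ ℝ² : v_1 = 0 and v_2 ≤ 0}. -/
open Filter Topology Set

/-- from Example 4.1: for
`Q₀ = {(x₁, x₂) : |x₁| + x₂³ - x₁² ≤ 0}`, the tangent cone at the origin is
`{(v₁, v₂) : v₁ = 0 and v₂ ≤ 0}`. -/
theorem tangentCone_example :
    tangentCone' {x : ℝ × ℝ | |x.1| + x.2 ^ 3 - x.1 ^ 2 ≤ 0} (0, 0) =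
      {v : ℝ × ℝ | v.1 = 0 ∧ v.2 ≤ 0} := by
  ext v
  constructor
  · rintro ⟨t, w, ht, ht0, hw, hmem⟩
    have hw1 : Tendsto (fun k => (w k).1) atTop (𝓝 v.1) :=
      (continuous_fst.tendsto _).comp hw
    have hw2 : Tendsto (fun k => (w k).2) atTop (𝓝 v.2) :=
      (continuous_snd.tendsto _).comp hw
    have key : ∀ k, |(w k).1| ≤ t k * (w k).1 ^ 2 - (t k) ^ 2 * (w k).2 ^ 3 := by
      intro k
      have h := hmem k
      simp only [Set.mem_setOf_eq, Prod.fst_add, Prod.snd_add, Prod.smul_fst, Prod.smul_snd,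
        smul_eq_mul, Prod.fst_zero, Prod.snd_zero, zero_add] at h
      have habs : |t k * (w k).1| = t k * |(w k).1| := by
        rw [abs_mul, abs_of_pos (ht k)]
      rw [habs] at h
      have h' : t k * |(w k).1| ≤ t k * (t k * (w k).1 ^ 2 - (t k) ^ 2 * (w k).2 ^ 3) := by
        nlinarith [h]
      exact le_of_mul_le_mul_left h' (ht k)
    have hrhs : Tendsto (fun k => t k * (w k).1 ^ 2 - (t k) ^ 2 * (w k).2 ^ 3) atTop
        (𝓝 (0 * v.1 ^ 2 - 0 ^ 2 * v.2 ^ 3)) :=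
      (ht0.mul (hw1.pow 2)).sub ((ht0.pow 2).mul (hw2.pow 3))
    have hrhs0 : Tendsto (fun k => t k * (w k).1 ^ 2 - (t k) ^ 2 * (w k).2 ^ 3) atTop (𝓝 0) := by
      simpa using hrhs
    have hle : |v.1| ≤ 0 := le_of_tendsto_of_tendsto' hw1.abs hrhs0 key
    have hv1 : v.1 = 0 := abs_eq_zero.mp (le_antisymm hle (abs_nonneg _))
    refine ⟨hv1, ?_⟩
    by_contra hc
    push_neg at hc
    have htw : Tendsto (fun k => t k * |(w k).1|) atTop (𝓝 (0 * |v.1|)) :=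
      ht0.mul hw1.abs
    have h1 : ∀ᶠ k in atTop, t k * |(w k).1| < 1 :=
      htw.eventually (gt_mem_nhds (by simp))
    have h2 : ∀ᶠ k in atTop, v.2 / 2 < (w k).2 :=
      hw2.eventually (lt_mem_nhds (by linarith))
    obtain ⟨k, hk1, hk2⟩ := (h1.and h2).exists
    have hw2pos : 0 < (w k).2 := by linarith
    nlinarith [key k, ht k, abs_nonneg ((w k).1), sq_abs ((w k).1),
      mul_pos (mul_pos (ht k) (ht k)) (mul_pos (mul_pos hw2pos hw2pos) hw2pos),
      mul_nonneg (sub_nonneg.mpr hk1.le) (abs_nonneg ((w k).1))]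
  · rintro ⟨h1, h2⟩
    refine ⟨fun k => 1 / (k + 1), fun _ => v, fun k => by positivity,
      tendsto_one_div_add_atTop_nhds_zero_nat, tendsto_const_nhds, fun k => ?_⟩
    simp only [Set.mem_setOf_eq, Prod.fst_add, Prod.snd_add, Prod.smul_fst, Prod.smul_snd,
      smul_eq_mul, Prod.fst_zero, Prod.snd_zero, zero_add, h1, mul_zero]
    have hk : (0:ℝ) < 1 / (k + 1) := by positivity
    have hv2 : (1 / ((k:ℝ) + 1) * v.2) ^ 3 ≤ 0 :=
      Odd.pow_nonpos (by decide) (mul_nonpos_of_nonneg_of_nonpos hk.le h2)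
    rw [one_div] at hv2
    simp only [abs_zero, one_div]
    norm_num
    linarith
end
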